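/- arXiv:1612.00650 — 3 statements merged into one kernel-verified Lean document; each statement's English description precedes it below -/
import Mathlib

section
/- Fix τ ∈ (3,4) and set α = 1/(τ−1) (so that 1/3 < α < 1/2 and 3α > 1). Let L : [1,∞) → (0,∞) be measurable, bounded on every compact subset of [1,∞), and slowly varying, i.e. for every c > 0, L(cx)/L(x) → 1 as x → ∞. Then lim_{K→∞} limsup_{n→∞} (n^α L(n))^{−3} ∑_{i=K+1}^{n} ((n/i)^α L(n/i))^3 = 0. -/
open Filter Set MeasureTheory

/-- Uniform convergence theorem for slowly varying functions (additive form),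
proved via Egorov's theorem. -/
private lemma uct_slowly_varying (h : ℝ → ℝ) (hm : Measurable h)
    (hc : ∀ u : ℝ, Tendsto (fun t => h (t + u) - h t) atTop (nhds 0))
    {ε : ℝ} (hε : 0 < ε) :
    ∀ᶠ t in atTop, ∀ u ∈ Set.Icc (0:ℝ) 1, |h (t + u) - h t| ≤ ε := by
  by_contra hcon
  rw [Filter.not_eventually] at hcon
  have hseq : ∀ k : ℕ, ∃ t : ℝ, (k : ℝ) ≤ t ∧ ∃ u, u ∈ Set.Icc (0:ℝ) 1 ∧
      ε < |h (t + u) - h t| := by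
    intro k
    obtain ⟨t, ht, hnot⟩ := Filter.frequently_atTop.1 hcon (k : ℝ)
    push_neg at hnot
    obtain ⟨u, hu, hu2⟩ := hnot
    exact ⟨t, ht, u, hu, hu2⟩
  choose t ht u hu hbad using hseq
  have htt : Tendsto t atTop atTop :=
    tendsto_atTop_mono ht tendsto_natCast_atTop_atTop
  have htu : Tendsto (fun k => t k + u k) atTop atTop :=
    tendsto_atTop_mono (fun k => le_add_of_nonneg_right (hu k).1) htt
  have hFm : ∀ k : ℕ, StronglyMeasurable (fun x : ℝ => h (t k + x) - h (t k)) := fun k =>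
    ((hm.comp (measurable_const.add measurable_id)).sub measurable_const).stronglyMeasurable
  have hGm : ∀ k : ℕ, StronglyMeasurable (fun x : ℝ => h (t k + u k + x) - h (t k + u k)) :=
    fun k =>
    ((hm.comp (measurable_const.add measurable_id)).sub measurable_const).stronglyMeasurable
  have hFc : ∀ x : ℝ, Tendsto (fun k => h (t k + x) - h (t k)) atTop (nhds 0) :=
    fun x => (hc x).comp htt
  have hGc : ∀ x : ℝ, Tendsto (fun k => h (t k + u k + x) - h (t k + u k)) atTop (nhds 0) :=
    fun x => (hc x).comp htu
  obtain ⟨s₁, hs₁sub, hs₁m, hs₁μ, hA⟩ :=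
    MeasureTheory.tendstoUniformlyOn_of_ae_tendsto (μ := volume) (s := Set.Icc (0:ℝ) 2)
      (g := fun _ => (0:ℝ)) hFm stronglyMeasurable_const measurableSet_Icc
      (by rw [Real.volume_Icc]; exact ENNReal.ofReal_ne_top)
      (Filter.Eventually.of_forall fun x _ => hFc x) (by norm_num : (0:ℝ) < 1/2)
  obtain ⟨s₂, hs₂sub, hs₂m, hs₂μ, hB⟩ :=
    MeasureTheory.tendstoUniformlyOn_of_ae_tendsto (μ := volume) (s := Set.Icc (0:ℝ) 1)
      (g := fun _ => (0:ℝ)) hGm stronglyMeasurable_const measurableSet_Icc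
      (by rw [Real.volume_Icc]; exact ENNReal.ofReal_ne_top)
      (Filter.Eventually.of_forall fun x _ => hGc x) (by norm_num : (0:ℝ) < 1/4)
  rw [Metric.tendstoUniformlyOn_iff] at hA hB
  obtain ⟨k, hkA, hkB⟩ := ((hA (ε/2) (by linarith)).and (hB (ε/2) (by linarith))).exists
  have hCvol : volume ((fun v => u k + v) '' (Set.Icc (0:ℝ) 1 \ s₂))
      = volume (Set.Icc (0:ℝ) 1 \ s₂) := by
    have himg : (fun v => u k + v) '' (Set.Icc (0:ℝ) 1 \ s₂)
        = (fun x => -u k + x) ⁻¹' (Set.Icc (0:ℝ) 1 \ s₂) := by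
      ext x
      simp only [Set.mem_image, Set.mem_preimage]
      constructor
      · rintro ⟨v, hv, rfl⟩
        simpa using hv
      · intro hx
        exact ⟨-u k + x, hx, by ring⟩
    rw [himg, MeasureTheory.measure_preimage_add]
  have hCsub : (fun v => u k + v) '' (Set.Icc (0:ℝ) 1 \ s₂) ⊆ Set.Icc (0:ℝ) 2 := by
    rintro x ⟨v, hv, rfl⟩
    obtain ⟨⟨hv0, hv1⟩, -⟩ := hv
    constructor
    · show (0:ℝ) ≤ u k + v
      linarith [(hu k).1]
    · show u k + v ≤ 2
      linarith [(hu k).2]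
  have hne : ((Set.Icc (0:ℝ) 2 \ s₁) ∩
      ((fun v => u k + v) '' (Set.Icc (0:ℝ) 1 \ s₂))).Nonempty := by
    rw [Set.nonempty_iff_ne_empty]
    intro hemp
    have hCs₁ : (fun v => u k + v) '' (Set.Icc (0:ℝ) 1 \ s₂) ⊆ s₁ := by
      intro x hx
      by_contra hxs
      exact Set.eq_empty_iff_forall_notMem.1 hemp x ⟨⟨hCsub hx, hxs⟩, hx⟩
    have h1 : volume (Set.Icc (0:ℝ) 1) ≤ volume (Set.Icc (0:ℝ) 1 \ s₂) + volume s₂ := by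
      refine le_trans (measure_mono ?_) (measure_union_le _ _)
      intro x hx
      by_cases hxs : x ∈ s₂
      · exact Or.inr hxs
      · exact Or.inl ⟨hx, hxs⟩
    rw [← hCvol] at h1
    have h2 : volume ((fun v => u k + v) '' (Set.Icc (0:ℝ) 1 \ s₂)) ≤ ENNReal.ofReal (1/2) :=
      le_trans (measure_mono hCs₁) hs₁μ
    have h3 : volume (Set.Icc (0:ℝ) 1) ≤ ENNReal.ofReal (1/2) + ENNReal.ofReal (1/4) :=
      le_trans h1 (add_le_add h2 hs₂μ)
    rw [Real.volume_Icc, ← ENNReal.ofReal_add (by norm_num) (by norm_num),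
      ENNReal.ofReal_le_ofReal_iff (by norm_num)] at h3
    norm_num at h3
  obtain ⟨x, hxA, hxC⟩ := hne
  obtain ⟨v, hvB, hvx⟩ := hxC
  have h1' : |h (t k + x) - h (t k)| < ε/2 := by
    have := hkA x hxA
    rw [Real.dist_eq] at this
    simpa [abs_sub_comm] using this
  have h2' : |h (t k + u k + v) - h (t k + u k)| < ε/2 := by
    have := hkB v hvB
    rw [Real.dist_eq] at this
    simpa [abs_sub_comm] using this
  have hvx' : u k + v = x := hvx
  have hGx : t k + u k + v = t k + x := by rw [add_assoc, hvx']
  rw [hGx] at h2'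
  have tri : |h (t k + u k) - h (t k)| ≤
      |h (t k + u k) - h (t k + x)| + |h (t k + x) - h (t k)| := abs_sub_le _ _ _
  rw [abs_sub_comm (h (t k + u k)) (h (t k + x))] at tri
  linarith [hbad k]

/-- Potter-type bound for slowly varying functions. -/
private lemma potter_bound (L : ℝ → ℝ) (hLpos : ∀ x : ℝ, 1 ≤ x → 0 < L x)
    (hLmeas : Measurable L)
    (hLslow : ∀ c : ℝ, 0 < c → Tendsto (fun x : ℝ => L (c * x) / L x) atTop (nhds 1))
    {δ : ℝ} (hδ : 0 < δ) :
    ∃ X : ℝ, 1 ≤ X ∧ ∀ x y : ℝ, X ≤ x → x ≤ y → L x ≤ Real.exp δ * (y / x) ^ δ * L y := by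
  have hm : Measurable (fun s : ℝ => Real.log (L (Real.exp s))) :=
    Real.measurable_log.comp (hLmeas.comp Real.measurable_exp)
  have hc : ∀ u : ℝ, Tendsto (fun s : ℝ =>
      Real.log (L (Real.exp (s + u))) - Real.log (L (Real.exp s))) atTop (nhds 0) := by
    intro u
    have h1 : Tendsto (fun s : ℝ => L (Real.exp u * Real.exp s) / L (Real.exp s))
        atTop (nhds 1) := (hLslow (Real.exp u) (Real.exp_pos u)).comp Real.tendsto_exp_atTop
    have h2 : Tendsto (fun s : ℝ => Real.log (L (Real.exp u * Real.exp s) / L (Real.exp s)))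
        atTop (nhds 0) := by
      have := (Real.continuousAt_log one_ne_zero).tendsto.comp h1
      simpa [Function.comp_def] using this
    refine h2.congr' ?_
    filter_upwards [eventually_ge_atTop (max 0 (-u))] with s hs
    have hs0 : (0:ℝ) ≤ s := le_trans (le_max_left _ _) hs
    have hsu : (0:ℝ) ≤ s + u := by
      have := le_trans (le_max_right _ _) hs; linarith
    have e1 : (1:ℝ) ≤ Real.exp s := Real.one_le_exp hs0
    have e2 : (1:ℝ) ≤ Real.exp (s + u) := Real.one_le_exp hsu
    have e3 : Real.exp u * Real.exp s = Real.exp (s + u) := by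
      rw [← Real.exp_add, add_comm]
    rw [e3, Real.log_div (ne_of_gt (hLpos _ e2)) (ne_of_gt (hLpos _ e1))]
  obtain ⟨T, hT⟩ := eventually_atTop.1 (uct_slowly_varying _ hm hc hδ)
  set h : ℝ → ℝ := fun s => Real.log (L (Real.exp s)) with hh
  have chain : ∀ m : ℕ, ∀ t : ℝ, T ≤ t → ∀ s : ℝ, 0 ≤ s → s ≤ (m:ℝ) + 1 →
      |h (t + s) - h t| ≤ δ * ((m:ℝ) + 1) := by
    intro m
    induction m with
    | zero =>
      intro t ht s hs0 hs1
      have := hT t ht s ⟨hs0, by simpa using hs1⟩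
      simpa using this
    | succ m ih =>
      intro t ht s hs0 hs1
      by_cases hsm : s ≤ (m:ℝ) + 1
      · have := ih t ht s hs0 hsm
        have hm0 : (0:ℝ) ≤ (m:ℝ) := Nat.cast_nonneg m
        push_cast
        push_cast at this
        nlinarith [hδ.le]
      · push_neg at hsm
        have hm0 : (0:ℝ) ≤ (m:ℝ) := Nat.cast_nonneg m
        have hs1' : (0:ℝ) ≤ s - 1 := by linarith
        have ih1 := ih t ht (s - 1) hs1' (by push_cast at hs1 ⊢; linarith)
        have base := hT (t + (s - 1)) (by linarith) 1 ⟨zero_le_one, le_refl 1⟩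
        have heq : t + (s - 1) + 1 = t + s := by ring
        rw [heq] at base
        have base' : |h (t + s) - h (t + (s - 1))| ≤ δ := base
        have tri : |h (t + s) - h t| ≤ |h (t + s) - h (t + (s-1))| + |h (t + (s-1)) - h t| :=
          abs_sub_le _ _ _
        push_cast
        push_cast at ih1
        linarith
  have chain' : ∀ t : ℝ, T ≤ t → ∀ s : ℝ, 0 ≤ s → |h (t + s) - h t| ≤ δ * (s + 1) := by
    intro t ht s hs0
    have h1 := chain ⌊s⌋₊ t ht s hs0 (le_of_lt (Nat.lt_floor_add_one s))
    have h2 : (⌊s⌋₊ : ℝ) ≤ s := Nat.floor_le hs0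
    nlinarith [hδ.le]
  refine ⟨max 1 (Real.exp T), le_max_left _ _, ?_⟩
  intro x y hXx hxy
  have hx1 : (1:ℝ) ≤ x := le_trans (le_max_left _ _) hXx
  have hx0 : (0:ℝ) < x := lt_of_lt_of_le zero_lt_one hx1
  have hy1 : (1:ℝ) ≤ y := le_trans hx1 hxy
  have hy0 : (0:ℝ) < y := lt_of_lt_of_le zero_lt_one hy1
  have hTx : T ≤ Real.log x := by
    rw [Real.le_log_iff_exp_le hx0]
    exact le_trans (le_max_right _ _) hXx
  have hs0 : 0 ≤ Real.log y - Real.log x := by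
    have := Real.log_le_log hx0 hxy
    linarith
  have key := chain' (Real.log x) hTx (Real.log y - Real.log x) hs0
  rw [show Real.log x + (Real.log y - Real.log x) = Real.log y by ring] at key
  rw [abs_le] at key
  have h1 : h (Real.log y) = Real.log (L y) := by
    rw [hh]; simp only []; rw [Real.exp_log hy0]
  have h2 : h (Real.log x) = Real.log (L x) := by
    rw [hh]; simp only []; rw [Real.exp_log hx0]
  have key2 : Real.log (L x) ≤ Real.log (L y) + (Real.log y - Real.log x) * δ + δ := by
    have := key.1
    rw [h1, h2] at this
    nlinarith
  calc L x = Real.exp (Real.log (L x)) := (Real.exp_log (hLpos x hx1)).symm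
    _ ≤ Real.exp (Real.log (L y) + (Real.log y - Real.log x) * δ + δ) :=
        Real.exp_le_exp.mpr key2
    _ = Real.exp δ * (y / x) ^ δ * L y := by
        rw [Real.exp_add, Real.exp_add, Real.exp_log (hLpos y hy1),
          Real.rpow_def_of_pos (div_pos hy0 hx0), Real.log_div (ne_of_gt hy0) (ne_of_gt hx0)]
        ring

/-- The tail of the series `∑ i^e`. -/
private noncomputable def tailT (e : ℝ) (K : ℕ) : ℝ := ∑' j : ℕ, ((j + (K + 1) : ℕ) : ℝ) ^ e

private lemma tailT_nonneg (e : ℝ) (K : ℕ) : 0 ≤ tailT e K :=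
  tsum_nonneg fun j => Real.rpow_nonneg (Nat.cast_nonneg _) e

private lemma tailT_tendsto {e : ℝ} (he : e < -1) : Tendsto (tailT e) atTop (nhds 0) := by
  have h1 := tendsto_sum_nat_add (fun i : ℕ => (i : ℝ) ^ e)
  have h2 : Tendsto (fun K : ℕ => K + 1) atTop atTop := tendsto_add_atTop_nat 1
  exact (h1.comp h2).congr fun K => rfl

private lemma sum_Ioc_le_tailT {e : ℝ} (he : e < -1) (K n : ℕ) :
    ∑ i ∈ Finset.Ioc K n, (i : ℝ) ^ e ≤ tailT e K := by
  have hIoc : Finset.Ioc K n = Finset.Ico (K+1) (n+1) := by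
    ext i
    simp [Nat.lt_succ_iff, Nat.succ_le_iff]
  rw [hIoc, Finset.sum_Ico_eq_sum_range]
  have hsum : Summable (fun j : ℕ => ((j + (K + 1) : ℕ) : ℝ) ^ e) := by
    have h0 : Summable (fun i : ℕ => (i : ℝ) ^ e) := Real.summable_nat_rpow.mpr he
    exact ((summable_nat_add_iff (K+1)).mpr h0).congr fun j => by push_cast; ring_nf
  have hle : ∑ j ∈ Finset.range (n + 1 - (K + 1)), ((j + (K + 1) : ℕ) : ℝ) ^ e ≤ tailT e K :=
    Summable.sum_le_tsum _ (fun j _ => Real.rpow_nonneg (Nat.cast_nonneg _) e) hsum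
  refine le_trans (le_of_eq (Finset.sum_congr rfl fun j _ => ?_)) hle
  rw [add_comm (K+1) j]

/-- **Third-moment tail estimate for power-law degrees.**
Fix `τ ∈ (3,4)` and `α = 1/(τ−1)`. Let `L : [1,∞) → (0,∞)` be measurable, bounded on compact
subsets of `[1,∞)`, and slowly varying. Then
`lim_{K→∞} limsup_{n→∞} (n^α L(n))^{−3} ∑_{i=K+1}^n ((n/i)^α L(n/i))^3 = 0`. -/
theorem third_moment_tail_slowly_varying
    (τ : ℝ) (hτ : τ ∈ Set.Ioo (3 : ℝ) 4) (α : ℝ) (hα : α = 1 / (τ - 1))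
    (L : ℝ → ℝ)
    (hLpos : ∀ x : ℝ, 1 ≤ x → 0 < L x)
    (hLmeas : Measurable L)
    (hLbdd : ∀ K : Set ℝ, IsCompact K → K ⊆ Set.Ici (1 : ℝ) → ∃ M : ℝ, ∀ x ∈ K, L x ≤ M)
    (hLslow : ∀ c : ℝ, 0 < c →
      Tendsto (fun x : ℝ => L (c * x) / L x) atTop (nhds 1)) :
    Tendsto (fun K : ℕ =>
      Filter.limsup (fun n : ℕ =>
        (∑ i ∈ Finset.Ioc K n, (((n : ℝ) / (i : ℝ)) ^ α * L ((n : ℝ) / (i : ℝ))) ^ 3)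
          / ((n : ℝ) ^ α * L (n : ℝ)) ^ 3) atTop)
      atTop (nhds 0) := by
  obtain ⟨hτ3, hτ4⟩ := hτ
  have hτ1 : (0:ℝ) < τ - 1 := by linarith
  have hα0 : 0 < α := by rw [hα]; positivity
  have h3α : 1 < 3 * α := by
    rw [hα, mul_one_div, lt_div_iff₀ hτ1]
    linarith
  set δ : ℝ := (3 * α - 1) / 6 with hδdef
  have hδ : 0 < δ := by rw [hδdef]; linarith
  have hδα : δ < α := by rw [hδdef]; linarith
  obtain ⟨X, hX1, hP⟩ := potter_bound L hLpos hLmeas hLslow hδ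
  have hX0 : (0:ℝ) < X := lt_of_lt_of_le zero_lt_one hX1
  obtain ⟨M, hM⟩ := hLbdd (Set.Icc 1 X) isCompact_Icc (fun x hx => hx.1)
  have hM0 : 0 < M := lt_of_lt_of_le (hLpos 1 le_rfl) (hM 1 ⟨le_rfl, hX1⟩)
  have hee : ((δ - α) * 3) = 3 * δ - 3 * α := by ring
  have he1 : (δ - α) * 3 < -1 := by rw [hee, hδdef]; linarith
  have hq : 1 + (δ - α) * 3 < 0 := by linarith
  have hC₁0 : (0:ℝ) < (Real.exp δ) ^ 3 := by positivity
  have hbpos : (0:ℝ) < L X * X ^ δ :=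
    mul_pos (hLpos X hX1) (Real.rpow_pos_of_pos hX0 δ)
  have hC₃0 : (0:ℝ) < X ^ α * M * Real.exp δ / (L X * X ^ δ) := by
    apply div_pos _ hbpos
    exact mul_pos (mul_pos (Real.rpow_pos_of_pos hX0 α) hM0) (Real.exp_pos δ)
  have hC₂0 : (0:ℝ) < (X ^ α * M * Real.exp δ / (L X * X ^ δ)) ^ 3 := by positivity
  -- lower bound for L
  have hlow : ∀ z : ℝ, X ≤ z → L X * X ^ δ ≤ Real.exp δ * z ^ δ * L z := by
    intro z hz
    have hz0 : (0:ℝ) < z := lt_of_lt_of_le hX0 hz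
    have h1 := hP X z le_rfl hz
    have h2 : (z / X) ^ δ * X ^ δ = z ^ δ := by
      rw [Real.div_rpow hz0.le hX0.le]
      field_simp
    calc L X * X ^ δ ≤ (Real.exp δ * (z / X) ^ δ * L z) * X ^ δ :=
          mul_le_mul_of_nonneg_right h1 (Real.rpow_nonneg hX0.le δ)
      _ = Real.exp δ * z ^ δ * L z := by rw [← h2]; ring
  -- nonnegativity of the quantity
  have hSnn : ∀ K n : ℕ,
      0 ≤ (∑ i ∈ Finset.Ioc K n, (((n:ℝ)/(i:ℝ)) ^ α * L ((n:ℝ)/(i:ℝ))) ^ 3)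
        / ((n:ℝ) ^ α * L (n:ℝ)) ^ 3 := by
    intro K n
    apply div_nonneg
    · apply Finset.sum_nonneg
      intro i hi
      rw [Finset.mem_Ioc] at hi
      have hi0 : (0:ℝ) < (i:ℝ) :=
        Nat.cast_pos.mpr (lt_of_le_of_lt (Nat.zero_le K) hi.1)
      have hin : (i:ℝ) ≤ (n:ℝ) := Nat.cast_le.mpr hi.2
      have hr1 : (1:ℝ) ≤ (n:ℝ)/(i:ℝ) := (le_div_iff₀ hi0).mpr (by linarith)
      have hr0 : (0:ℝ) < (n:ℝ)/(i:ℝ) := lt_of_lt_of_le zero_lt_one hr1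
      exact pow_nonneg (mul_nonneg (Real.rpow_nonneg hr0.le α) (hLpos _ hr1).le) 3
    · rcases Nat.eq_zero_or_pos n with hn | hn
      · subst hn
        norm_num [Real.zero_rpow hα0.ne']
      · have hn1 : (1:ℝ) ≤ (n:ℝ) := by exact_mod_cast hn
        have hn0 : (0:ℝ) < (n:ℝ) := lt_of_lt_of_le zero_lt_one hn1
        exact pow_nonneg (mul_nonneg (Real.rpow_nonneg hn0.le α) (hLpos _ hn1).le) 3
  -- master eventual bound
  have hmaster : ∀ K : ℕ, ∀ n : ℕ, X ≤ (n:ℝ) →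
      (∑ i ∈ Finset.Ioc K n, (((n:ℝ)/(i:ℝ)) ^ α * L ((n:ℝ)/(i:ℝ))) ^ 3)
        / ((n:ℝ) ^ α * L (n:ℝ)) ^ 3
      ≤ (Real.exp δ) ^ 3 * tailT ((δ - α) * 3) K
        + (X ^ α * M * Real.exp δ / (L X * X ^ δ)) ^ 3 * (n:ℝ) ^ (1 + (δ - α) * 3) := by
    intro K n hXn
    have hn1 : (1:ℝ) ≤ (n:ℝ) := le_trans hX1 hXn
    have hn0 : (0:ℝ) < (n:ℝ) := lt_of_lt_of_le zero_lt_one hn1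
    have hLn : 0 < L (n:ℝ) := hLpos _ hn1
    have hd0 : (0:ℝ) < (n:ℝ) ^ α * L (n:ℝ) := mul_pos (Real.rpow_pos_of_pos hn0 α) hLn
    have hterm : ∀ i ∈ Finset.Ioc K n,
        (((n:ℝ)/(i:ℝ)) ^ α * L ((n:ℝ)/(i:ℝ))) ^ 3 / ((n:ℝ) ^ α * L (n:ℝ)) ^ 3
        ≤ (Real.exp δ) ^ 3 * (i:ℝ) ^ ((δ - α) * 3)
          + (X ^ α * M * Real.exp δ / (L X * X ^ δ)) ^ 3 * (n:ℝ) ^ ((δ - α) * 3) := by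
      intro i hi
      rw [Finset.mem_Ioc] at hi
      have hi0 : (0:ℝ) < (i:ℝ) :=
        Nat.cast_pos.mpr (lt_of_le_of_lt (Nat.zero_le K) hi.1)
      have hin : (i:ℝ) ≤ (n:ℝ) := Nat.cast_le.mpr hi.2
      have hr1 : (1:ℝ) ≤ (n:ℝ)/(i:ℝ) := (le_div_iff₀ hi0).mpr (by linarith)
      have hr0 : (0:ℝ) < (n:ℝ)/(i:ℝ) := lt_of_lt_of_le zero_lt_one hr1
      have hLr : 0 < L ((n:ℝ)/(i:ℝ)) := hLpos _ hr1
      have ha0 : 0 < ((n:ℝ)/(i:ℝ)) ^ α * L ((n:ℝ)/(i:ℝ)) :=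
        mul_pos (Real.rpow_pos_of_pos hr0 α) hLr
      rw [← div_pow]
      by_cases hcase : X ≤ (n:ℝ)/(i:ℝ)
      · -- region A : Potter bound
        have hi1 : (1:ℝ) ≤ (i:ℝ) := by
          have := Nat.succ_le_of_lt (lt_of_le_of_lt (Nat.zero_le K) hi.1)
          exact_mod_cast this
        have hrn : (n:ℝ)/(i:ℝ) ≤ (n:ℝ) := by
          rw [div_le_iff₀ hi0]
          nlinarith [mul_le_mul_of_nonneg_left hi1 hn0.le]
        have hPA := hP ((n:ℝ)/(i:ℝ)) (n:ℝ) hcase hrn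
        have hni : (n:ℝ) / ((n:ℝ)/(i:ℝ)) = (i:ℝ) := by
          field_simp
        rw [hni] at hPA
        have hAD : ((n:ℝ)/(i:ℝ)) ^ α * L ((n:ℝ)/(i:ℝ)) / ((n:ℝ) ^ α * L (n:ℝ))
            ≤ Real.exp δ * (i:ℝ) ^ (δ - α) := by
          rw [div_le_iff₀ hd0]
          calc ((n:ℝ)/(i:ℝ)) ^ α * L ((n:ℝ)/(i:ℝ))
              ≤ ((n:ℝ)/(i:ℝ)) ^ α * (Real.exp δ * (i:ℝ) ^ δ * L (n:ℝ)) :=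
                mul_le_mul_of_nonneg_left hPA (Real.rpow_nonneg hr0.le α)
            _ = Real.exp δ * (i:ℝ) ^ (δ - α) * ((n:ℝ) ^ α * L (n:ℝ)) := by
                rw [Real.div_rpow hn0.le hi0.le, Real.rpow_sub hi0]
                field_simp
        have hcube : (((n:ℝ)/(i:ℝ)) ^ α * L ((n:ℝ)/(i:ℝ)) / ((n:ℝ) ^ α * L (n:ℝ))) ^ 3
            ≤ (Real.exp δ * (i:ℝ) ^ (δ - α)) ^ 3 :=
          pow_le_pow_left₀ (by positivity) hAD 3
        have hexp : (Real.exp δ * (i:ℝ) ^ (δ - α)) ^ 3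
            = (Real.exp δ) ^ 3 * (i:ℝ) ^ ((δ - α) * 3) := by
          rw [mul_pow]
          congr 1
          rw [Real.rpow_mul (Nat.cast_nonneg i), ← Real.rpow_natCast ((i:ℝ) ^ (δ - α)) 3]
          norm_num
        refine le_trans hcube (le_trans (le_of_eq hexp) (le_add_of_nonneg_right ?_))
        exact mul_nonneg hC₂0.le (Real.rpow_nonneg hn0.le _)
      · -- region B : compact bound plus lower bound on L n
        push_neg at hcase
        have haX : ((n:ℝ)/(i:ℝ)) ^ α * L ((n:ℝ)/(i:ℝ)) ≤ X ^ α * M :=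
          mul_le_mul (Real.rpow_le_rpow hr0.le hcase.le hα0.le)
            (hM _ ⟨hr1, hcase.le⟩) hLr.le (Real.rpow_nonneg hX0.le α)
        have key : X ^ α * M ≤ (X ^ α * M * Real.exp δ / (L X * X ^ δ)) * (n:ℝ) ^ (δ - α)
            * ((n:ℝ) ^ α * L (n:ℝ)) := by
          have h1 := hlow (n:ℝ) hXn
          have h2 : (X ^ α * M * Real.exp δ / (L X * X ^ δ)) * (n:ℝ) ^ (δ - α)
              * ((n:ℝ) ^ α * L (n:ℝ))
              = (X ^ α * M / (L X * X ^ δ)) * (Real.exp δ * (n:ℝ) ^ δ * L (n:ℝ)) := by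
            rw [Real.rpow_sub hn0]
            field_simp
          rw [h2]
          have h3 : (X ^ α * M / (L X * X ^ δ)) * (L X * X ^ δ)
              ≤ (X ^ α * M / (L X * X ^ δ)) * (Real.exp δ * (n:ℝ) ^ δ * L (n:ℝ)) := by
            apply mul_le_mul_of_nonneg_left h1
            exact div_nonneg (mul_nonneg (Real.rpow_nonneg hX0.le α) hM0.le) hbpos.le
          calc X ^ α * M = (X ^ α * M / (L X * X ^ δ)) * (L X * X ^ δ) := by
                field_simp
                exact (div_self (hLpos X hX1).ne').symm
            _ ≤ _ := h3
        have hAD : ((n:ℝ)/(i:ℝ)) ^ α * L ((n:ℝ)/(i:ℝ)) / ((n:ℝ) ^ α * L (n:ℝ))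
            ≤ (X ^ α * M * Real.exp δ / (L X * X ^ δ)) * (n:ℝ) ^ (δ - α) := by
          rw [div_le_iff₀ hd0]
          exact le_trans haX key
        have hcube : (((n:ℝ)/(i:ℝ)) ^ α * L ((n:ℝ)/(i:ℝ)) / ((n:ℝ) ^ α * L (n:ℝ))) ^ 3
            ≤ ((X ^ α * M * Real.exp δ / (L X * X ^ δ)) * (n:ℝ) ^ (δ - α)) ^ 3 :=
          pow_le_pow_left₀ (by positivity) hAD 3
        have hexp : ((X ^ α * M * Real.exp δ / (L X * X ^ δ)) * (n:ℝ) ^ (δ - α)) ^ 3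
            = (X ^ α * M * Real.exp δ / (L X * X ^ δ)) ^ 3 * (n:ℝ) ^ ((δ - α) * 3) := by
          rw [mul_pow]
          congr 1
          rw [Real.rpow_mul hn0.le, ← Real.rpow_natCast ((n:ℝ) ^ (δ - α)) 3]
          norm_num
        refine le_trans hcube (le_trans (le_of_eq hexp) (le_add_of_nonneg_left ?_))
        exact mul_nonneg hC₁0.le (Real.rpow_nonneg hi0.le _)
    calc (∑ i ∈ Finset.Ioc K n, (((n:ℝ)/(i:ℝ)) ^ α * L ((n:ℝ)/(i:ℝ))) ^ 3)
          / ((n:ℝ) ^ α * L (n:ℝ)) ^ 3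
        = ∑ i ∈ Finset.Ioc K n,
            (((n:ℝ)/(i:ℝ)) ^ α * L ((n:ℝ)/(i:ℝ))) ^ 3 / ((n:ℝ) ^ α * L (n:ℝ)) ^ 3 :=
          Finset.sum_div _ _ _
      _ ≤ ∑ i ∈ Finset.Ioc K n,
            ((Real.exp δ) ^ 3 * (i:ℝ) ^ ((δ - α) * 3)
              + (X ^ α * M * Real.exp δ / (L X * X ^ δ)) ^ 3 * (n:ℝ) ^ ((δ - α) * 3)) :=
          Finset.sum_le_sum hterm
      _ = (Real.exp δ) ^ 3 * (∑ i ∈ Finset.Ioc K n, (i:ℝ) ^ ((δ - α) * 3))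
            + ((Finset.Ioc K n).card : ℝ)
              * ((X ^ α * M * Real.exp δ / (L X * X ^ δ)) ^ 3 * (n:ℝ) ^ ((δ - α) * 3)) := by
          rw [Finset.sum_add_distrib, ← Finset.mul_sum, Finset.sum_const, nsmul_eq_mul]
      _ ≤ (Real.exp δ) ^ 3 * tailT ((δ - α) * 3) K
            + (n:ℝ) * ((X ^ α * M * Real.exp δ / (L X * X ^ δ)) ^ 3 * (n:ℝ) ^ ((δ - α) * 3)) := by
          apply add_le_add
          · exact mul_le_mul_of_nonneg_left (sum_Ioc_le_tailT he1 K n) hC₁0.le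
          · apply mul_le_mul_of_nonneg_right _
              (mul_nonneg hC₂0.le (Real.rpow_nonneg hn0.le _))
            rw [Nat.card_Ioc]
            exact_mod_cast Nat.sub_le n K
      _ = (Real.exp δ) ^ 3 * tailT ((δ - α) * 3) K
            + (X ^ α * M * Real.exp δ / (L X * X ^ δ)) ^ 3 * (n:ℝ) ^ (1 + (δ - α) * 3) := by
          rw [Real.rpow_add hn0, Real.rpow_one]
          ring
  -- limsup bound for each K
  have hlimsup_le : ∀ K : ℕ,
      Filter.limsup (fun n : ℕ =>
        (∑ i ∈ Finset.Ioc K n, (((n:ℝ)/(i:ℝ)) ^ α * L ((n:ℝ)/(i:ℝ))) ^ 3)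
          / ((n:ℝ) ^ α * L (n:ℝ)) ^ 3) atTop
      ≤ (Real.exp δ) ^ 3 * tailT ((δ - α) * 3) K := by
    intro K
    obtain ⟨n₀, hn₀⟩ := exists_nat_ge X
    have hev : ∀ᶠ n : ℕ in atTop,
        (∑ i ∈ Finset.Ioc K n, (((n:ℝ)/(i:ℝ)) ^ α * L ((n:ℝ)/(i:ℝ))) ^ 3)
          / ((n:ℝ) ^ α * L (n:ℝ)) ^ 3
        ≤ (Real.exp δ) ^ 3 * tailT ((δ - α) * 3) K
          + (X ^ α * M * Real.exp δ / (L X * X ^ δ)) ^ 3 * (n:ℝ) ^ (1 + (δ - α) * 3) := by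
      filter_upwards [eventually_ge_atTop n₀] with n hn
      exact hmaster K n (le_trans hn₀ (Nat.cast_le.mpr hn))
    have hpow0 : Tendsto (fun n : ℕ => (n:ℝ) ^ (1 + (δ - α) * 3)) atTop (nhds 0) := by
      have h1 := tendsto_rpow_neg_atTop (show (0:ℝ) < -(1 + (δ - α) * 3) by linarith)
      have h2 := h1.comp (tendsto_natCast_atTop_atTop (R := ℝ))
      simpa [Function.comp_def] using h2
    have hg : Tendsto (fun n : ℕ =>
        (Real.exp δ) ^ 3 * tailT ((δ - α) * 3) K
          + (X ^ α * M * Real.exp δ / (L X * X ^ δ)) ^ 3 * (n:ℝ) ^ (1 + (δ - α) * 3))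
        atTop (nhds ((Real.exp δ) ^ 3 * tailT ((δ - α) * 3) K)) := by
      have h3 := Tendsto.const_add ((Real.exp δ) ^ 3 * tailT ((δ - α) * 3) K)
        (hpow0.const_mul ((X ^ α * M * Real.exp δ / (L X * X ^ δ)) ^ 3))
      simpa using h3
    have hcb : IsCoboundedUnder (· ≤ ·) atTop (fun n : ℕ =>
        (∑ i ∈ Finset.Ioc K n, (((n:ℝ)/(i:ℝ)) ^ α * L ((n:ℝ)/(i:ℝ))) ^ 3)
          / ((n:ℝ) ^ α * L (n:ℝ)) ^ 3) :=
      isCoboundedUnder_le_of_le atTop (fun n => hSnn K n)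
    have hbd : IsBoundedUnder (· ≤ ·) atTop (fun n : ℕ =>
        (Real.exp δ) ^ 3 * tailT ((δ - α) * 3) K
          + (X ^ α * M * Real.exp δ / (L X * X ^ δ)) ^ 3 * (n:ℝ) ^ (1 + (δ - α) * 3)) :=
      hg.isBoundedUnder_le
    calc Filter.limsup _ atTop ≤ Filter.limsup (fun n : ℕ =>
          (Real.exp δ) ^ 3 * tailT ((δ - α) * 3) K
            + (X ^ α * M * Real.exp δ / (L X * X ^ δ)) ^ 3 * (n:ℝ) ^ (1 + (δ - α) * 3)) atTop :=
          limsup_le_limsup hev hcb hbd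
      _ = (Real.exp δ) ^ 3 * tailT ((δ - α) * 3) K := hg.limsup_eq
  have hlimsup_ge : ∀ K : ℕ,
      0 ≤ Filter.limsup (fun n : ℕ =>
        (∑ i ∈ Finset.Ioc K n, (((n:ℝ)/(i:ℝ)) ^ α * L ((n:ℝ)/(i:ℝ))) ^ 3)
          / ((n:ℝ) ^ α * L (n:ℝ)) ^ 3) atTop := by
    intro K
    obtain ⟨n₀, hn₀⟩ := exists_nat_ge X
    have hbd : IsBoundedUnder (· ≤ ·) atTop (fun n : ℕ =>
        (∑ i ∈ Finset.Ioc K n, (((n:ℝ)/(i:ℝ)) ^ α * L ((n:ℝ)/(i:ℝ))) ^ 3)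
          / ((n:ℝ) ^ α * L (n:ℝ)) ^ 3) := by
      have hev : ∀ᶠ n : ℕ in atTop,
          (∑ i ∈ Finset.Ioc K n, (((n:ℝ)/(i:ℝ)) ^ α * L ((n:ℝ)/(i:ℝ))) ^ 3)
            / ((n:ℝ) ^ α * L (n:ℝ)) ^ 3
          ≤ (Real.exp δ) ^ 3 * tailT ((δ - α) * 3) K
            + (X ^ α * M * Real.exp δ / (L X * X ^ δ)) ^ 3 * (n:ℝ) ^ (1 + (δ - α) * 3) := by
        filter_upwards [eventually_ge_atTop n₀] with n hn
        exact hmaster K n (le_trans hn₀ (Nat.cast_le.mpr hn))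
      have hpow0 : Tendsto (fun n : ℕ => (n:ℝ) ^ (1 + (δ - α) * 3)) atTop (nhds 0) := by
        have h1 := tendsto_rpow_neg_atTop (show (0:ℝ) < -(1 + (δ - α) * 3) by linarith)
        have h2 := h1.comp (tendsto_natCast_atTop_atTop (R := ℝ))
        simpa [Function.comp_def] using h2
      have hg : Tendsto (fun n : ℕ =>
          (Real.exp δ) ^ 3 * tailT ((δ - α) * 3) K
            + (X ^ α * M * Real.exp δ / (L X * X ^ δ)) ^ 3 * (n:ℝ) ^ (1 + (δ - α) * 3))
          atTop (nhds ((Real.exp δ) ^ 3 * tailT ((δ - α) * 3) K)) := by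
        have h3 := Tendsto.const_add ((Real.exp δ) ^ 3 * tailT ((δ - α) * 3) K)
          (hpow0.const_mul ((X ^ α * M * Real.exp δ / (L X * X ^ δ)) ^ 3))
        simpa using h3
      exact hg.isBoundedUnder_le.mono_le hev
    exact le_limsup_of_frequently_le
      ((Filter.Eventually.of_forall fun n => hSnn K n).frequently) hbd
  have hT0 : Tendsto (fun K : ℕ => (Real.exp δ) ^ 3 * tailT ((δ - α) * 3) K)
      atTop (nhds 0) := by
    have := (tailT_tendsto he1).const_mul ((Real.exp δ) ^ 3)
    simpa using this
  exact tendsto_of_tendsto_of_tendsto_of_le_of_le tendsto_const_nhds hT0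
    hlimsup_ge hlimsup_le
end

section
/- Let T > 0 and let f ∈ D_+[0,T] be good. Then f is continuous at every excursion right-endpoint: for every r ∈ Y(f) one has f(r−) = f(r). -/
open MeasureTheory Set Filter

/-- The running minimum `f̲(x) = inf_{0 ≤ y ≤ x} f(y)`. -/
noncomputable def pastMin (f : ℝ → ℝ) (x : ℝ) : ℝ := sInf (f '' Set.Icc 0 x)

/-- Membership in `D₊[0,T]`: `f` is right-continuous on `[0,T)`, has a left limit at every
point of `(0,T]` recorded by the function `fl` (with the convention `fl 0 = f 0`), and has
only positive jumps on `[0,T]`. -/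
def MemDplus (f fl : ℝ → ℝ) (T : ℝ) : Prop :=
  (∀ x ∈ Set.Ico (0 : ℝ) T, ContinuousWithinAt f (Set.Icc x T) x) ∧
  (∀ x ∈ Set.Ioc (0 : ℝ) T, Tendsto f (nhdsWithin x (Set.Ico 0 x)) (nhds (fl x))) ∧
  fl 0 = f 0 ∧
  (∀ x ∈ Set.Icc (0 : ℝ) T, fl x ≤ f x)

/-- `(l,r) ⊆ [0,T]` is an excursion of `f` (with left-limit function `fl`):
`min{f(l−),f(l)} = f̲(l) = f̲(r) = min{f(r−),f(r)}` and `f(x) > f̲(r)` for all `x ∈ (l,r)`. -/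
def IsExcursion (f fl : ℝ → ℝ) (T l r : ℝ) : Prop :=
  0 ≤ l ∧ l < r ∧ r ≤ T ∧
  min (fl l) (f l) = pastMin f l ∧
  pastMin f l = pastMin f r ∧
  pastMin f r = min (fl r) (f r) ∧
  ∀ x ∈ Set.Ioo l r, pastMin f r < f x

/-- `Y(f)`: the set of right endpoints of excursions of `f`. -/
def excursionEnds (f fl : ℝ → ℝ) (T : ℝ) : Set ℝ := {r | ∃ l, IsExcursion f fl T l r}

/-- `f` is good: (a) `Y(f)` has no isolated points and the complement in `[0,T]` of the union
of all excursion intervals has Lebesgue measure zero; (b) `f` does not attain a local minimum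
at any point of `Y(f)`. -/
def GoodFun (f fl : ℝ → ℝ) (T : ℝ) : Prop :=
  (∀ r ∈ excursionEnds f fl T, ∀ ε > 0,
      ∃ r' ∈ excursionEnds f fl T, r' ≠ r ∧ |r' - r| < ε) ∧
  volume (Set.Icc 0 T \ ⋃ (l : ℝ) (r : ℝ) (_ : IsExcursion f fl T l r), Set.Ioo l r) = 0 ∧
  (∀ r ∈ excursionEnds f fl T, ∀ δ > 0, ∃ x ∈ Set.Icc (0 : ℝ) T, |x - r| < δ ∧ f x < f r)

lemma neBot_left (x : ℝ) (hx : 0 < x) : (nhdsWithin x (Set.Ico 0 x)).NeBot := by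
  refine mem_closure_iff_nhdsWithin_neBot.mp ?_
  rw [closure_Ico hx.ne]
  exact ⟨hx.le, le_rfl⟩

lemma pastMin_const_on (f : ℝ → ℝ) {l r m : ℝ} (h0l : 0 ≤ l) (hlr : l ≤ r)
    (hml : pastMin f l = m) (hmr : pastMin f r = m) (hfr : m ≤ f r)
    (hint : ∀ x ∈ Set.Ioo l r, m < f x) {b : ℝ} (hlb : l ≤ b) (hbr : b ≤ r) :
    pastMin f b = m := by
  have hbound : ∀ z ∈ f '' Set.Ioc l r, m ≤ z := by
    rintro z ⟨x, hx, rfl⟩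
    rcases eq_or_lt_of_le hx.2 with h | h
    · exact h ▸ hfr
    · exact (hint x ⟨hx.1, h⟩).le
  by_cases hB : BddBelow (f '' Set.Icc 0 l)
  · have e1 : f '' Set.Icc 0 b = f '' Set.Icc 0 l ∪ f '' Set.Ioc l b := by
      rw [← Set.image_union, Set.Icc_union_Ioc_eq_Icc h0l hlb]
    have e2 : f '' Set.Icc 0 r = f '' Set.Icc 0 b ∪ f '' Set.Ioc b r := by
      rw [← Set.image_union, Set.Icc_union_Ioc_eq_Icc (h0l.trans hlb) hbr]
    have hb1 : BddBelow (f '' Set.Icc 0 b) := by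
      rw [e1]
      exact hB.union ⟨m, fun z hz =>
        hbound z (Set.image_mono (f := f) (Set.Ioc_subset_Ioc_right hbr) hz)⟩
    have hb2 : BddBelow (f '' Set.Icc 0 r) := by
      rw [e2]
      exact hb1.union ⟨m, fun z hz =>
        hbound z (Set.image_mono (f := f) (Set.Ioc_subset_Ioc_left hlb) hz)⟩
    have le1 : pastMin f b ≤ pastMin f l :=
      csInf_le_csInf hb1 ((Set.nonempty_Icc.mpr h0l).image f)
        (Set.image_mono (f := f) (Set.Icc_subset_Icc_right hlb))
    have le2 : pastMin f r ≤ pastMin f b :=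
      csInf_le_csInf hb2 ((Set.nonempty_Icc.mpr (h0l.trans hlb)).image f)
        (Set.image_mono (f := f) (Set.Icc_subset_Icc_right hbr))
    rw [hml] at le1; rw [hmr] at le2
    exact le_antisymm le1 le2
  · have hnb : ¬ BddBelow (f '' Set.Icc 0 b) := fun h =>
      hB (h.mono (Set.image_mono (f := f) (Set.Icc_subset_Icc_right hlb)))
    have hnr : ¬ BddBelow (f '' Set.Icc 0 r) := fun h =>
      hB (h.mono (Set.image_mono (f := f) (Set.Icc_subset_Icc_right hlr)))
    have h1 : pastMin f b = 0 := Real.sInf_of_not_bddBelow hnb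
    have h2 : pastMin f r = 0 := Real.sInf_of_not_bddBelow hnr
    rw [h1, ← hmr, h2]

/-- **Good functions are continuous at excursion endpoints (Remark 5.1 of the paper).**
If `f ∈ D₊[0,T]` is good, then for every excursion right-endpoint `r ∈ Y(f)` one has
`f(r−) = f(r)`. -/
theorem good_continuous_at_excursion_ends
    (T : ℝ) (hT : 0 < T)
    (f fl : ℝ → ℝ) (hf : MemDplus f fl T) (hgood : GoodFun f fl T) :
    ∀ r ∈ excursionEnds f fl T, fl r = f r := by
  intro r hrY
  obtain ⟨l, hl0, hlr, hrT, hminl, hll, hminr, hint⟩ := id hrY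
  by_contra hne
  have h0r : 0 ≤ r := hl0.trans hlr.le
  have hjump : fl r < f r := lt_of_le_of_ne (hf.2.2.2 r ⟨h0r, hrT⟩) hne
  have hmfl : pastMin f r = fl r := by rw [hminr, min_eq_left hjump.le]
  have hmltfr : pastMin f r < f r := by rw [hmfl]; exact hjump
  -- the past minimum is constant on [l, r]
  have hconst : ∀ b, l ≤ b → b ≤ r → pastMin f b = pastMin f r := fun b h1 h2 =>
    pastMin_const_on f hl0 hlr.le hll rfl
      (by rw [hminr]; exact min_le_right _ _) hint h1 h2
  -- no excursion endpoint just to the right of a point where `f` exceeds the past minimum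
  have noY : ∀ y, l ≤ y → y ≤ r → pastMin f r < f y →
      ∃ δ > 0, ∀ y' ∈ excursionEnds f fl T, y' ∉ Set.Ioo y (y + δ) := by
    intro y hly hyr hfy
    rcases eq_or_lt_of_le (hyr.trans hrT) with hyT | hyT
    · refine ⟨1, one_pos, ?_⟩
      rintro y' ⟨l', h'⟩ hy'
      have h5 : y' ≤ y := by rw [hyT]; exact h'.2.2.1
      exact absurd hy'.1 (not_lt.mpr h5)
    · have h0y : 0 ≤ y := hl0.trans hly
      have rc : ContinuousWithinAt f (Set.Icc y T) y := hf.1 y ⟨h0y, hyT⟩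
      set c := (pastMin f r + f y) / 2 with hc
      have hcm : pastMin f r < c := by rw [hc]; linarith
      have hcf : c < f y := by rw [hc]; linarith
      have hev : f ⁻¹' (Set.Ioi c) ∈ nhdsWithin y (Set.Icc y T) :=
        rc (isOpen_Ioi.mem_nhds hcf)
      obtain ⟨U, hUopen, hyU, hU⟩ := mem_nhdsWithin.mp hev
      obtain ⟨δ, hδpos, hball⟩ := Metric.isOpen_iff.mp hUopen y hyU
      have key : ∀ x, y ≤ x → x < y + δ → x ≤ T → c < f x := by
        intro x h1 h2 h3
        refine hU ⟨hball ?_, h1, h3⟩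
        rw [Metric.mem_ball, Real.dist_eq, abs_of_nonneg (by linarith)]
        linarith
      refine ⟨δ, hδpos, ?_⟩
      rintro y' hy'Y hy'
      obtain ⟨l', h'⟩ := hy'Y
      have hy'T : y' ≤ T := h'.2.2.1
      have h1 : c < f y' := key y' hy'.1.le hy'.2 hy'T
      haveI := neBot_left y' (lt_of_le_of_lt h0y hy'.1)
      have h2 : c ≤ fl y' := by
        refine ge_of_tendsto (hf.2.1 y' ⟨lt_of_le_of_lt h0y hy'.1, hy'T⟩) ?_
        rw [Filter.eventually_iff, mem_nhdsWithin]
        exact ⟨Set.Ioi y, isOpen_Ioi, hy'.1, fun x hx =>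
          (key x (le_of_lt hx.1) (lt_trans hx.2.2 hy'.2) (le_trans (le_of_lt hx.2.2) hy'T)).le⟩
      have hmy : pastMin f y = pastMin f r := hconst y hly hyr
      have h3 : pastMin f y' ≤ pastMin f r := by
        by_cases hB : BddBelow (f '' Set.Icc 0 y)
        · have e : f '' Set.Icc 0 y' = f '' Set.Icc 0 y ∪ f '' Set.Ioc y y' := by
            rw [← Set.image_union, Set.Icc_union_Ioc_eq_Icc h0y hy'.1.le]
          have hb' : BddBelow (f '' Set.Icc 0 y') := by
            rw [e]
            refine hB.union ⟨c, ?_⟩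
            rintro z ⟨x, hx, rfl⟩
            exact (key x hx.1.le (lt_of_le_of_lt hx.2 hy'.2) (hx.2.trans hy'T)).le
          calc pastMin f y' ≤ pastMin f y :=
                csInf_le_csInf hb' ((Set.nonempty_Icc.mpr h0y).image f)
                  (Set.image_mono (f := f) (Set.Icc_subset_Icc_right hy'.1.le))
            _ = pastMin f r := hmy
        · have hnb : ¬ BddBelow (f '' Set.Icc 0 y') := fun h =>
            hB (h.mono (Set.image_mono (f := f) (Set.Icc_subset_Icc_right hy'.1.le)))
          have hz1 : pastMin f y' = 0 := Real.sInf_of_not_bddBelow hnb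
          have hz2 : pastMin f y = 0 := Real.sInf_of_not_bddBelow hB
          rw [hz1, ← hmy, hz2]
      have h4 : pastMin f y' = min (fl y') (f y') := h'.2.2.2.2.2.1
      have h6 : c ≤ pastMin f y' := by rw [h4]; exact le_min h2 h1.le
      linarith
  -- one can always find an excursion endpoint strictly between a barrier and a jump point
  have step : ∀ y ∈ excursionEnds f fl T, ∀ β, l ≤ β → β < y → y ≤ r → pastMin f r < f y →
      ∃ y', y' ∈ excursionEnds f fl T ∧ β < y' ∧ y' < y := by
    intro y hyY β hlβ hβy hyr hfy
    obtain ⟨δ, hδ, hno⟩ := noY y (hlβ.trans hβy.le) hyr hfy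
    obtain ⟨y', hy'Y, hy'ne, hy'd⟩ := hgood.1 y hyY (min δ (y - β)) (lt_min hδ (by linarith))
    have habs := abs_lt.mp hy'd
    have hlt : y' < y := by
      rcases lt_or_gt_of_ne hy'ne with h | h
      · exact h
      · have h7 := habs.2
        have h8 := min_le_left δ (y - β)
        exact absurd ⟨h, by linarith⟩ (hno y' hy'Y)
    have hβ' : β < y' := by
      have h7 := habs.1
      have h8 := min_le_right δ (y - β)
      linarith
    exact ⟨y', hy'Y, hβ', hlt⟩
  -- barrier
  obtain ⟨w, hwY, hlw, hwr⟩ := step r hrY l le_rfl hlr le_rfl hmltfr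
  -- interior endpoints are jump points with left limit equal to the past minimum
  have hK : ∀ y ∈ excursionEnds f fl T, l < y → y < r → fl y = pastMin f r := by
    intro y hyY h1 h2
    have hfy : pastMin f r < f y := hint y ⟨h1, h2⟩
    obtain ⟨l', h'⟩ := hyY
    have h4 : pastMin f y = min (fl y) (f y) := h'.2.2.2.2.2.1
    have h5 : pastMin f y = pastMin f r := hconst y h1.le h2.le
    rcases le_or_gt (fl y) (f y) with h | h
    · rw [min_eq_left h] at h4
      exact h4.symm.trans h5
    · rw [min_eq_right h.le] at h4
      linarith
  have hfw' : ∀ y, y ∈ excursionEnds f fl T → w < y → y ≤ r → pastMin f r < f y := by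
    intro y hy h1 h2
    rcases eq_or_lt_of_le h2 with h | h
    · rw [h]; exact hmltfr
    · exact hint y ⟨hlw.trans h1, h⟩
  -- recursively construct a strictly decreasing sequence of endpoints above the barrier
  have next : ∀ p : {y : ℝ // y ∈ excursionEnds f fl T ∧ w < y ∧ y ≤ r},
      {q : {y : ℝ // y ∈ excursionEnds f fl T ∧ w < y ∧ y ≤ r} // q.1 < p.1} := by
    intro p
    have h := step p.1 p.2.1 w hlw.le p.2.2.1 p.2.2.2 (hfw' p.1 p.2.1 p.2.2.1 p.2.2.2)
    exact ⟨⟨h.choose, h.choose_spec.1, h.choose_spec.2.1,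
      h.choose_spec.2.2.le.trans p.2.2.2⟩, h.choose_spec.2.2⟩
  let v : ℕ → {y : ℝ // y ∈ excursionEnds f fl T ∧ w < y ∧ y ≤ r} :=
    fun n => Nat.rec ⟨r, hrY, hwr, le_rfl⟩ (fun _ p => (next p).1) n
  have hvsucc : ∀ n, v (n + 1) = (next (v n)).1 := fun n => rfl
  have hdec : ∀ n, (v (n + 1)).1 < (v n).1 := fun n => by
    rw [hvsucc n]; exact (next (v n)).2
  have hv0 : (v 0).1 = r := rfl
  have hbdd : BddBelow (Set.range fun n => (v n).1) := by
    refine ⟨w, ?_⟩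
    rintro x ⟨n, rfl⟩
    exact (v n).2.2.1.le
  have hanti : StrictAnti fun n => (v n).1 := strictAnti_nat_of_succ_lt hdec
  set z := ⨅ n, (v n).1 with hz
  have htend : Tendsto (fun n => (v n).1) atTop (nhds z) :=
    tendsto_atTop_ciInf hanti.antitone hbdd
  have hzw : w ≤ z := le_ciInf fun n => (v n).2.2.1.le
  have hzlt : ∀ n, z < (v n).1 := fun n =>
    lt_of_le_of_lt (ciInf_le hbdd (n + 1)) (hdec n)
  have hzl : l < z := lt_of_lt_of_le hlw hzw
  have hzr : z < r := by have h := hzlt 0; rwa [hv0] at h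
  have hfz : pastMin f r < f z := hint z ⟨hzl, hzr⟩
  have h0z : 0 ≤ z := hl0.trans hzl.le
  have hzT : z < T := lt_of_lt_of_le hzr hrT
  -- the left limits at the sequence points all equal the past minimum
  have hfl_n : ∀ n : ℕ, fl (v (n + 1)).1 = pastMin f r := by
    intro n
    have hlt : (v (n + 1)).1 < r :=
      lt_of_lt_of_le (hanti (Nat.succ_pos n)) hv0.le
    exact hK (v (n + 1)).1 (v (n + 1)).2.1 (hlw.trans (v (n + 1)).2.2.1) hlt
  -- pick "dips" of `f` near the past minimum, just left of the sequence points
  have hx : ∀ n : ℕ, ∃ x, x ∈ Set.Ioo (v (n + 2)).1 (v (n + 1)).1 ∧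
      |f x - pastMin f r| < 1 / (n + 1) := by
    intro n
    have hy0 : 0 < (v (n + 1)).1 := lt_of_le_of_lt h0z (hzlt (n + 1))
    haveI := neBot_left (v (n + 1)).1 hy0
    have htl : Tendsto f (nhdsWithin (v (n + 1)).1 (Set.Ico 0 (v (n + 1)).1))
        (nhds (pastMin f r)) := by
      have h := hf.2.1 (v (n + 1)).1 ⟨hy0, (v (n + 1)).2.2.2.trans hrT⟩
      rwa [hfl_n n] at h
    have h1 : f ⁻¹' (Metric.ball (pastMin f r) (1 / (n + 1))) ∈
        nhdsWithin (v (n + 1)).1 (Set.Ico 0 (v (n + 1)).1) :=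
      htl (Metric.ball_mem_nhds _ (by positivity))
    have h2 : Set.Ioo (v (n + 2)).1 (v (n + 1)).1 ∈
        nhdsWithin (v (n + 1)).1 (Set.Ico 0 (v (n + 1)).1) := by
      rw [mem_nhdsWithin]
      exact ⟨Set.Ioi (v (n + 2)).1, isOpen_Ioi, hdec (n + 1), fun x hx => ⟨hx.1, hx.2.2⟩⟩
    obtain ⟨x, hx1, hx2⟩ := Filter.nonempty_of_mem (Filter.inter_mem h2 h1)
    refine ⟨x, hx1, ?_⟩
    rwa [Set.mem_preimage, Metric.mem_ball, Real.dist_eq] at hx2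
  choose x hx1 hx2 using hx
  have hxz : Tendsto x atTop (nhds z) := by
    have hlow : Tendsto (fun n => (v (n + 2)).1) atTop (nhds z) :=
      htend.comp (tendsto_add_atTop_nat 2)
    have hupp : Tendsto (fun n => (v (n + 1)).1) atTop (nhds z) :=
      htend.comp (tendsto_add_atTop_nat 1)
    exact tendsto_of_tendsto_of_tendsto_of_le_of_le hlow hupp
      (fun n => (hx1 n).1.le) (fun n => (hx1 n).2.le)
  have hfxm : Tendsto (fun n => f (x n)) atTop (nhds (pastMin f r)) := by
    rw [tendsto_iff_dist_tendsto_zero]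
    refine squeeze_zero (fun n => dist_nonneg) (fun n => ?_)
      tendsto_one_div_add_atTop_nhds_zero_nat
    rw [Real.dist_eq]
    exact (hx2 n).le
  have hxin : ∀ n, x n ∈ Set.Icc z T := fun n =>
    ⟨le_trans (ciInf_le hbdd (n + 2)) (hx1 n).1.le,
     le_trans (hx1 n).2.le ((v (n + 1)).2.2.2.trans hrT)⟩
  have hrc : ContinuousWithinAt f (Set.Icc z T) z := hf.1 z ⟨h0z, hzT⟩
  have hfxz : Tendsto (fun n => f (x n)) atTop (nhds (f z)) := by
    have h : Tendsto x atTop (nhdsWithin z (Set.Icc z T)) :=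
      tendsto_nhdsWithin_iff.mpr ⟨hxz, Filter.Eventually.of_forall hxin⟩
    exact Filter.Tendsto.comp hrc h
  have hfinal : f z = pastMin f r := tendsto_nhds_unique hfxz hfxm
  linarith
end

section
/- Let n be a positive integer, d_1, …, d_n nonnegative integers, p ∈ [0,1], and let (I_{ij})_{i ∈ [n], j ∈ [d_i]} be independent Bernoulli(√p) random variables. Set d̃_i := ∑_{j=1}^{d_i} I_{ij} and f := ∑_{i=1}^{n} d̃_i (d̃_i − 1). Then E[f] = p ∑_{i=1}^{n} d_i(d_i − 1), and for every t > 0, P( | f − p ∑_{i=1}^{n} d_i(d_i − 1) | > t ) ≤ 2 exp( − t^2 / ( 2 ∑_{i=1}^{n} d_i (d_i + 1)^2 ) ). -/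
open MeasureTheory ProbabilityTheory

namespace PDC
open Real

/-- Hoeffding's lemma for a Bernoulli(q) variable. -/
lemma bern_mgf {q : ℝ} (hq0 : 0 ≤ q) (hq1 : q ≤ 1) (u : ℝ) :
    (1 - q) * exp (-q * u) + q * exp ((1 - q) * u) ≤ exp (u ^ 2 / 8) := by
  set den : ℝ → ℝ := fun x => 1 - q + q * exp x with hden_def
  have hden : ∀ x, 0 < den x := by
    intro x
    rcases lt_or_eq_of_le hq1 with h | h
    · have : 0 ≤ q * exp x := mul_nonneg hq0 (exp_pos x).le
      simp only [hden_def]; linarith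
    · simp only [hden_def, h]; simpa using exp_pos x
  -- g x = q x + x^2/8 - log (den x), g' x = q + x/4 - q e^x / den x
  set g : ℝ → ℝ := fun x => q * x + x ^ 2 / 8 - log (den x) with hg_def
  set g' : ℝ → ℝ := fun x => q + x / 4 - q * exp x / den x with hg'_def
  have hdg : ∀ x, HasDerivAt g (g' x) x := by
    intro x
    have h1 : HasDerivAt den (q * exp x) x := by
      exact ((Real.hasDerivAt_exp x).const_mul q).const_add (1 - q)
    have h2 : HasDerivAt (fun y => log (den y)) (q * exp x / den x) x :=
      h1.log (hden x).ne'
    have h3 : HasDerivAt (fun y => q * y + y ^ 2 / 8) (q + x / 4) x := by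
      have := ((hasDerivAt_id x).const_mul q).add
        (((hasDerivAt_pow 2 x)).div_const 8)
      exact this.congr_deriv (by simp; ring)
    exact h3.sub h2
  have hdg' : ∀ x, HasDerivAt g' (1 / 4 - q * (1 - q) * exp x / (den x) ^ 2) x := by
    intro x
    have h1 : HasDerivAt den (q * exp x) x := by
      exact ((Real.hasDerivAt_exp x).const_mul q).const_add (1 - q)
    have h2 : HasDerivAt (fun y => q * exp y) (q * exp x) x :=
      (Real.hasDerivAt_exp x).const_mul q
    have h3 : HasDerivAt (fun y => q * exp y / den y)
        ((q * exp x * den x - q * exp x * (q * exp x)) / (den x) ^ 2) x :=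
      h2.div h1 (hden x).ne'
    have h4 : HasDerivAt (fun y => q + y / 4) (1 / 4) x := by
      simpa using ((hasDerivAt_id x).div_const 4).const_add q
    have := h4.sub h3
    refine this.congr_deriv ?_
    have hd : den x = 1 - q + q * exp x := rfl
    rw [hd]
    ring
  have hg'nonneg : ∀ x, 0 ≤ 1 / 4 - q * (1 - q) * exp x / (den x) ^ 2 := by
    intro x
    have key : 4 * (q * (1 - q) * exp x) ≤ (den x) ^ 2 := by
      have : (den x) ^ 2 - 4 * (q * (1 - q) * exp x) = (1 - q - q * exp x) ^ 2 := by
        have hd : den x = 1 - q + q * exp x := rfl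
        rw [hd]; ring
      nlinarith [sq_nonneg (1 - q - q * exp x)]
    have hpos : (0:ℝ) < (den x) ^ 2 := pow_pos (hden x) 2
    rw [sub_nonneg, div_le_iff₀ hpos]
    nlinarith [key, sq_nonneg (1 - q - q * exp x), hden x]
  have hg'mono : Monotone g' :=
    monotone_of_deriv_nonneg (fun x => (hdg' x).differentiableAt)
      (fun x => by rw [(hdg' x).deriv]; exact hg'nonneg x)
  have hg'0 : g' 0 = 0 := by
    have hd : den 0 = 1 := by simp [hden_def]
    simp [hg'_def, hd]
  have hg0 : g 0 = 0 := by
    have hd : den 0 = 1 := by simp [hden_def]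
    simp [hg_def, hd]
  have hgnonneg : ∀ x, 0 ≤ g x := by
    intro x
    rcases le_or_gt 0 x with hx | hx
    · have hmono : MonotoneOn g (Set.Ici 0) := by
        apply monotoneOn_of_deriv_nonneg (convex_Ici 0)
          (Continuous.continuousOn (by
            exact (continuous_const.mul continuous_id).add
              ((continuous_pow 2).div_const 8) |>.sub
              ((continuous_const.add (continuous_const.mul continuous_exp)).log
                fun y => (hden y).ne')))
          (fun y _ => (hdg y).differentiableAt.differentiableWithinAt)
        intro y hy
        rw [(hdg y).deriv]
        have : (0:ℝ) ≤ y := le_of_lt (by simpa using hy)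
        calc (0:ℝ) = g' 0 := hg'0.symm
          _ ≤ g' y := hg'mono this
      have := hmono (Set.mem_Ici.2 le_rfl) (Set.mem_Ici.2 hx) hx
      rw [hg0] at this; exact this
    · have hanti : AntitoneOn g (Set.Iic 0) := by
        apply antitoneOn_of_deriv_nonpos (convex_Iic 0)
          (Continuous.continuousOn (by
            exact (continuous_const.mul continuous_id).add
              ((continuous_pow 2).div_const 8) |>.sub
              ((continuous_const.add (continuous_const.mul continuous_exp)).log
                fun y => (hden y).ne')))
          (fun y _ => (hdg y).differentiableAt.differentiableWithinAt)
        intro y hy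
        rw [(hdg y).deriv]
        have : y ≤ (0:ℝ) := le_of_lt (by simpa using hy)
        calc g' y ≤ g' 0 := hg'mono this
          _ = 0 := hg'0
      have := hanti (Set.mem_Iic.2 hx.le) (Set.mem_Iic.2 le_rfl) hx.le
      rw [hg0] at this; exact this
  -- conclude
  have hlog : den u ≤ exp (q * u + u ^ 2 / 8) := by
    have := hgnonneg u
    rw [hg_def] at this
    have hle : log (den u) ≤ q * u + u ^ 2 / 8 := by dsimp at this; linarith
    calc den u = exp (log (den u)) := (exp_log (hden u)).symm
      _ ≤ exp (q * u + u ^ 2 / 8) := exp_le_exp.2 hle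
  have hfinal : (1 - q) * exp (-q * u) + q * exp ((1 - q) * u)
      = exp (-q * u) * den u := by
    have hd : den u = 1 - q + q * exp u := rfl
    have he : exp ((1 - q) * u) = exp (-q * u) * exp u := by
      rw [← exp_add]; congr 1; ring
    rw [hd, he]; ring
  rw [hfinal]
  calc exp (-q * u) * den u ≤ exp (-q * u) * exp (q * u + u ^ 2 / 8) :=
        mul_le_mul_of_nonneg_left hlog (exp_pos _).le
    _ = exp (u ^ 2 / 8) := by rw [← exp_add]; congr 1; ring


variable {a : ℝ}

def vb (b : Bool) : ℝ := bif b then 1 else 0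
def w (a : ℝ) (b : Bool) : ℝ := bif b then a else 1 - a

lemma vb_nonneg (b : Bool) : 0 ≤ vb b := by cases b <;> simp [vb]
lemma vb_le_one (b : Bool) : vb b ≤ 1 := by cases b <;> simp [vb]
lemma w_nonneg (ha0 : 0 ≤ a) (ha1 : a ≤ 1) (b : Bool) : 0 ≤ w a b := by
  cases b <;> simp [w] <;> linarith

def S {m : ℕ} (c : Fin m → Bool) : ℝ := ∑ j, vb (c j)
def Wm (a : ℝ) {m : ℕ} (c : Fin m → Bool) : ℝ := ∏ j, w a (c j)

lemma S_nonneg {m : ℕ} (c : Fin m → Bool) : 0 ≤ S c :=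
  Finset.sum_nonneg fun j _ => vb_nonneg (c j)

lemma S_le {m : ℕ} (c : Fin m → Bool) : S c ≤ m := by
  calc S c ≤ ∑ _j : Fin m, (1:ℝ) := Finset.sum_le_sum fun j _ => vb_le_one (c j)
    _ = m := by simp

lemma Wm_nonneg (ha0 : 0 ≤ a) (ha1 : a ≤ 1) {m : ℕ} (c : Fin m → Bool) :
    0 ≤ Wm a c := Finset.prod_nonneg fun j _ => w_nonneg ha0 ha1 (c j)

lemma S_cons {m : ℕ} (b : Bool) (c : Fin m → Bool) :
    S (Fin.cons b c) = vb b + S c := by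
  simp [S, Fin.sum_univ_succ]

lemma Wm_cons {m : ℕ} (b : Bool) (c : Fin m → Bool) :
    Wm a (Fin.cons b c) = w a b * Wm a c := by
  simp [Wm, Fin.prod_univ_succ]

lemma cube_succ {m : ℕ} (g : (Fin (m + 1) → Bool) → ℝ) :
    ∑ c, g c = ∑ c : Fin m → Bool, (g (Fin.cons false c) + g (Fin.cons true c)) := by
  rw [← (Fin.consEquiv (fun _ => Bool)).sum_comp g]
  rw [Fintype.sum_prod_type]
  rw [Fintype.sum_bool]
  rw [← Finset.sum_add_distrib]
  apply Finset.sum_congr rfl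
  intro c _
  rw [add_comm]
  rfl

lemma sum_Wm (ha0 : 0 ≤ a) (ha1 : a ≤ 1) : ∀ m : ℕ, ∑ c : Fin m → Bool, Wm a c = 1 := by
  intro m
  induction m with
  | zero => simp [Wm]
  | succ m ih =>
      rw [cube_succ (fun c => Wm a c)]
      have : ∀ c : Fin m → Bool,
          Wm a (Fin.cons false c) + Wm a (Fin.cons true c) = Wm a c := by
        intro c; rw [Wm_cons, Wm_cons]; simp [w]; ring
      rw [Finset.sum_congr rfl fun c _ => this c, ih]

lemma sum_Wm_S (ha0 : 0 ≤ a) (ha1 : a ≤ 1) :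
    ∀ m : ℕ, ∑ c : Fin m → Bool, Wm a c * S c = a * m := by
  intro m
  induction m with
  | zero =>
      have : ∀ c : Fin 0 → Bool, S c = 0 := by intro c; simp [S]
      simp [this]
  | succ m ih =>
      rw [cube_succ (fun c => Wm a c * S c)]
      have : ∀ c : Fin m → Bool,
          Wm a (Fin.cons false c) * S (Fin.cons false c)
            + Wm a (Fin.cons true c) * S (Fin.cons true c)
          = Wm a c * S c + a * Wm a c := by
        intro c
        rw [Wm_cons, Wm_cons, S_cons, S_cons]
        simp [w, vb]; ring
      rw [Finset.sum_congr rfl fun c _ => this c, Finset.sum_add_distrib,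
        ← Finset.mul_sum, ih, sum_Wm ha0 ha1]
      push_cast; ring

lemma sum_Wm_S2 (ha0 : 0 ≤ a) (ha1 : a ≤ 1) :
    ∀ m : ℕ, ∑ c : Fin m → Bool, Wm a c * (S c * (S c - 1)) = a ^ 2 * (m * ((m : ℝ) - 1)) := by
  intro m
  induction m with
  | zero =>
      have : ∀ c : Fin 0 → Bool, S c = 0 := by intro c; simp [S]
      simp [this]
  | succ m ih =>
      rw [cube_succ (fun c => Wm a c * (S c * (S c - 1)))]
      have : ∀ c : Fin m → Bool,
          Wm a (Fin.cons false c) * (S (Fin.cons false c) * (S (Fin.cons false c) - 1))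
            + Wm a (Fin.cons true c) * (S (Fin.cons true c) * (S (Fin.cons true c) - 1))
          = Wm a c * (S c * (S c - 1)) + (2 * a) * (Wm a c * S c) := by
        intro c
        rw [Wm_cons, Wm_cons, S_cons, S_cons]
        simp [w, vb]; ring
      rw [Finset.sum_congr rfl fun c _ => this c, Finset.sum_add_distrib,
        ← Finset.mul_sum, ih, sum_Wm_S ha0 ha1]
      push_cast; ring


lemma pair_step (ha0 : 0 ≤ a) (ha1 : a ≤ 1) (Wc A B l K : ℝ) (hW : 0 ≤ Wc)
    (hA0 : 0 ≤ A) (hAle : A ≤ K) :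
    (1 - a) * Wc * exp (B + -a * (2 * l * A)) + a * Wc * exp (B + (1 - a) * (2 * l * A))
      ≤ Wc * exp B * exp (l ^ 2 * K ^ 2 / 2) := by
  have hstep : (1 - a) * exp (-a * (2 * l * A)) + a * exp ((1 - a) * (2 * l * A))
      ≤ exp (l ^ 2 * K ^ 2 / 2) := by
    refine (bern_mgf ha0 ha1 (2 * l * A)).trans (exp_le_exp.2 ?_)
    have hsq : A ^ 2 ≤ K ^ 2 := by nlinarith
    nlinarith [mul_le_mul_of_nonneg_left hsq (sq_nonneg l)]
  calc (1 - a) * Wc * exp (B + -a * (2 * l * A)) + a * Wc * exp (B + (1 - a) * (2 * l * A))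
      = (Wc * exp B) * ((1 - a) * exp (-a * (2 * l * A)) + a * exp ((1 - a) * (2 * l * A))) := by
        rw [exp_add, exp_add]; ring
    _ ≤ (Wc * exp B) * exp (l ^ 2 * K ^ 2 / 2) :=
        mul_le_mul_of_nonneg_left hstep (mul_nonneg hW (exp_pos _).le)
    _ = Wc * exp B * exp (l ^ 2 * K ^ 2 / 2) := by ring

lemma vertex_mgf_aux (ha0 : 0 ≤ a) (ha1 : a ≤ 1) (l : ℝ) :
    ∀ (k r : ℕ),
      ∑ c : Fin k → Bool, Wm a c *
          exp (l * ((S c + r * a) ^ 2 - S c - r * a ^ 2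
            - a ^ 2 * (((k : ℝ) + r) * ((k : ℝ) + r - 1))))
        ≤ exp (l ^ 2 * k * ((k : ℝ) + r - 1) ^ 2 / 2) := by
  intro k
  induction k with
  | zero =>
      intro r
      have harg : ∀ c : Fin 0 → Bool,
          l * ((S c + (r:ℝ) * a) ^ 2 - S c - (r:ℝ) * a ^ 2
            - a ^ 2 * ((((0:ℕ):ℝ) + r) * (((0:ℕ):ℝ) + r - 1))) = 0 := by
        intro c
        have : S c = 0 := by simp [S]
        rw [this]; push_cast; ring
      simp only [harg]
      simp [Wm]
  | succ k ih =>
      intro r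
      simp only [Nat.cast_add, Nat.cast_one]
      rw [cube_succ]
      -- bound each summand
      have key : ∀ c : Fin k → Bool,
          Wm a (Fin.cons false c) *
              exp (l * ((S (Fin.cons false c) + r * a) ^ 2 - S (Fin.cons false c) - r * a ^ 2
                - a ^ 2 * ((((k:ℕ)+1 : ℝ) + r) * (((k:ℕ)+1 : ℝ) + r - 1))))
            + Wm a (Fin.cons true c) *
              exp (l * ((S (Fin.cons true c) + r * a) ^ 2 - S (Fin.cons true c) - r * a ^ 2
                - a ^ 2 * ((((k:ℕ)+1 : ℝ) + r) * (((k:ℕ)+1 : ℝ) + r - 1))))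
          ≤ Wm a c *
              exp (l * ((S c + ((r:ℝ)+1) * a) ^ 2 - S c - ((r:ℝ)+1) * a ^ 2
                - a ^ 2 * ((((k:ℕ)+1 : ℝ) + r) * (((k:ℕ)+1 : ℝ) + r - 1))))
            * exp (l ^ 2 * ((k : ℝ) + r) ^ 2 / 2) := by
        intro c
        set A : ℝ := S c + r * a with hA
        set B : ℝ := l * ((S c + ((r:ℝ)+1) * a) ^ 2 - S c - ((r:ℝ)+1) * a ^ 2
            - a ^ 2 * ((((k:ℕ)+1 : ℝ) + r) * (((k:ℕ)+1 : ℝ) + r - 1))) with hB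
        set u : ℝ := 2 * l * A with hu
        have hargf : l * ((S (Fin.cons false c) + r * a) ^ 2 - S (Fin.cons false c) - r * a ^ 2
            - a ^ 2 * ((((k:ℕ)+1 : ℝ) + r) * (((k:ℕ)+1 : ℝ) + r - 1))) = B + (-a * u) := by
          rw [S_cons, hB, hu, hA]; simp [vb]; ring
        have hargt : l * ((S (Fin.cons true c) + r * a) ^ 2 - S (Fin.cons true c) - r * a ^ 2
            - a ^ 2 * ((((k:ℕ)+1 : ℝ) + r) * (((k:ℕ)+1 : ℝ) + r - 1))) = B + ((1-a) * u) := by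
          rw [S_cons, hB, hu, hA]; simp [vb]; ring
        rw [hargf, hargt, Wm_cons, Wm_cons]
        have hwf : w a false = 1 - a := rfl
        have hwt : w a true = a := rfl
        rw [hwf, hwt, hu]
        apply pair_step ha0 ha1 _ _ _ _ _ (Wm_nonneg ha0 ha1 c)
        · rw [hA]
          have h1 := S_nonneg c
          have h2 : (0:ℝ) ≤ (r : ℝ) * a := mul_nonneg (by positivity) ha0
          linarith
        · rw [hA]
          have h1 := S_le c
          have h2 : (r : ℝ) * a ≤ r := by nlinarith [show (0:ℝ) ≤ (r:ℝ) by positivity]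
          linarith
      refine (Finset.sum_le_sum fun c _ => key c).trans ?_
      rw [← Finset.sum_mul]
      have hIH := ih (r + 1)
      have hsum_eq : ∑ c : Fin k → Bool, Wm a c *
            exp (l * ((S c + ((r:ℝ)+1) * a) ^ 2 - S c - ((r:ℝ)+1) * a ^ 2
              - a ^ 2 * ((((k:ℕ)+1 : ℝ) + r) * (((k:ℕ)+1 : ℝ) + r - 1))))
          = ∑ c : Fin k → Bool, Wm a c *
            exp (l * ((S c + ((r+1 : ℕ) : ℝ) * a) ^ 2 - S c - ((r+1 : ℕ) : ℝ) * a ^ 2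
              - a ^ 2 * (((k : ℝ) + ((r+1 : ℕ) : ℝ)) * ((k : ℝ) + ((r+1 : ℕ) : ℝ) - 1)))) := by
        apply Finset.sum_congr rfl
        intro c _
        congr 2
        push_cast
        ring
      rw [hsum_eq]
      calc (∑ c : Fin k → Bool, Wm a c *
            exp (l * ((S c + ((r+1 : ℕ) : ℝ) * a) ^ 2 - S c - ((r+1 : ℕ) : ℝ) * a ^ 2
              - a ^ 2 * (((k : ℝ) + ((r+1 : ℕ) : ℝ)) * ((k : ℝ) + ((r+1 : ℕ) : ℝ) - 1)))))
            * exp (l ^ 2 * ((k : ℝ) + r) ^ 2 / 2)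
          ≤ exp (l ^ 2 * k * ((k : ℝ) + ((r+1 : ℕ) : ℝ) - 1) ^ 2 / 2)
            * exp (l ^ 2 * ((k : ℝ) + r) ^ 2 / 2) := by
            apply mul_le_mul_of_nonneg_right hIH (exp_pos _).le
        _ = exp (l ^ 2 * (((k:ℕ):ℝ) + 1) * (((k:ℕ):ℝ) + 1 + r - 1) ^ 2 / 2) := by
            rw [← exp_add]; congr 1; push_cast; ring
      
/-- Per-vertex mgf bound. -/
lemma vertex_mgf (ha0 : 0 ≤ a) (ha1 : a ≤ 1) (l : ℝ) (m : ℕ) :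
    ∑ c : Fin m → Bool, Wm a c * exp (l * (S c * (S c - 1) - a ^ 2 * (m * ((m:ℝ) - 1))))
      ≤ exp (l ^ 2 * (m * ((m:ℝ) + 1) ^ 2) / 2) := by
  have h := vertex_mgf_aux ha0 ha1 l m 0
  have heq : ∀ c : Fin m → Bool,
      l * ((S c + ((0:ℕ):ℝ) * a) ^ 2 - S c - ((0:ℕ):ℝ) * a ^ 2
        - a ^ 2 * (((m : ℝ) + ((0:ℕ):ℝ)) * ((m : ℝ) + ((0:ℕ):ℝ) - 1)))
      = l * (S c * (S c - 1) - a ^ 2 * (m * ((m:ℝ) - 1))) := by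
    intro c; push_cast; ring
  simp only [heq] at h
  refine h.trans (exp_le_exp.2 ?_)
  push_cast
  have h2 : (0:ℝ) ≤ l ^ 2 * m := by positivity
  have h1 : ((m:ℝ) + 0 - 1) ^ 2 ≤ ((m:ℝ) + 1) ^ 2 := by
    nlinarith [show (0:ℝ) ≤ (m:ℝ) by positivity]
  nlinarith [mul_le_mul_of_nonneg_left h1 h2]


section Global
variable {n : ℕ} {d : Fin n → ℕ}

/-- global weight -/
def Wg (a : ℝ) (d : Fin n → ℕ) (c : (Σ i : Fin n, Fin (d i)) → Bool) : ℝ :=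
  ∏ x : Σ i : Fin n, Fin (d i), w a (c x)

/-- restriction to block i -/
def restr (c : (Σ i : Fin n, Fin (d i)) → Bool) (i : Fin n) : Fin (d i) → Bool :=
  fun j => c ⟨i, j⟩

def Fg (d : Fin n → ℕ) (c : (Σ i : Fin n, Fin (d i)) → Bool) : ℝ :=
  ∑ i, S (restr c i) * (S (restr c i) - 1)

lemma Wg_nonneg (ha0 : 0 ≤ a) (ha1 : a ≤ 1) (c : (Σ i : Fin n, Fin (d i)) → Bool) :
    0 ≤ Wg a d c :=
  Finset.prod_nonneg fun x _ => by cases hx : c x <;> simp [w] <;> linarith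

lemma Wg_uncurry (c : ∀ i, Fin (d i) → Bool) :
    Wg a d (fun x => c x.1 x.2) = ∏ i, Wm a (c i) := by
  rw [Wg, ← Finset.univ_sigma_univ, Finset.prod_sigma]
  rfl

lemma sum_cube_sigma (g : ((Σ i : Fin n, Fin (d i)) → Bool) → ℝ) :
    ∑ c, g c = ∑ c : ∀ i, Fin (d i) → Bool, g (fun x => c x.1 x.2) := by
  exact Fintype.sum_equiv
    (Equiv.piCurry (β := fun i : Fin n => Fin (d i)) fun _ _ => Bool) g
    (fun c => g (fun x => c x.1 x.2))
    (fun c => congrArg g (funext fun x => by cases x; rfl))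

lemma global_mean (ha0 : 0 ≤ a) (ha1 : a ≤ 1) :
    ∑ c, Wg a d c * Fg d c = a ^ 2 * ∑ i, (d i : ℝ) * ((d i : ℝ) - 1) := by
  classical
  have hswap : ∑ c, Wg a d c * Fg d c
      = ∑ i, ∑ c, Wg a d c * (S (restr c i) * (S (restr c i) - 1)) := by
    rw [Finset.sum_comm]
    apply Finset.sum_congr rfl
    intro c _
    rw [Fg, Finset.mul_sum]
  rw [hswap]
  rw [Finset.mul_sum]
  apply Finset.sum_congr rfl
  intro i _
  rw [sum_cube_sigma (fun c => Wg a d c * (S (restr c i) * (S (restr c i) - 1)))]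
  have hterm : ∀ c : ∀ i', Fin (d i') → Bool,
      Wg a d (fun x => c x.1 x.2) * (S (restr (fun x => c x.1 x.2) i) * (S (restr (fun x => c x.1 x.2) i) - 1))
      = ∏ i', (if i' = i then Wm a (c i') * (S (c i') * (S (c i') - 1)) else Wm a (c i')) := by
    intro c
    rw [Wg_uncurry]
    have hr : restr (fun x => c x.1 x.2) i = c i := rfl
    rw [hr]
    rw [← Finset.mul_prod_erase Finset.univ
      (fun i' => if i' = i then Wm a (c i') * (S (c i') * (S (c i') - 1)) else Wm a (c i'))
      (Finset.mem_univ i)]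
    rw [← Finset.mul_prod_erase Finset.univ (fun i' => Wm a (c i')) (Finset.mem_univ i)]
    rw [Finset.prod_congr rfl (fun i' hi' => if_neg (Finset.ne_of_mem_erase hi'))]
    rw [if_pos rfl]
    ring
  rw [Finset.sum_congr rfl fun c _ => hterm c]
  rw [← Fintype.prod_sum (fun i' x => if i' = i then Wm a x * (S x * (S x - 1)) else Wm a x)]
  have hfac : ∀ i' : Fin n,
      (∑ x : Fin (d i') → Bool, if i' = i then Wm a x * (S x * (S x - 1)) else Wm a x)
      = if i' = i then a ^ 2 * ((d i : ℝ) * ((d i : ℝ) - 1)) else 1 := by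
    intro i'
    by_cases h : i' = i
    · subst h
      simp only [if_pos rfl]
      exact sum_Wm_S2 ha0 ha1 (d i')
    · simp only [if_neg h]
      exact sum_Wm ha0 ha1 (d i')
  rw [Finset.prod_congr rfl fun i' _ => hfac i']
  rw [Finset.prod_ite_eq' Finset.univ i (fun _ => a ^ 2 * ((d i : ℝ) * ((d i : ℝ) - 1)))]
  simp

lemma global_mgf (ha0 : 0 ≤ a) (ha1 : a ≤ 1) (l : ℝ) :
    ∑ c, Wg a d c * exp (l * (Fg d c - a ^ 2 * ∑ i, (d i : ℝ) * ((d i : ℝ) - 1)))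
      ≤ exp (l ^ 2 * (∑ i, (d i : ℝ) * ((d i : ℝ) + 1) ^ 2) / 2) := by
  classical
  rw [sum_cube_sigma (fun c => Wg a d c * exp (l * (Fg d c - a ^ 2 * ∑ i, (d i : ℝ) * ((d i : ℝ) - 1))))]
  have hterm : ∀ c : ∀ i', Fin (d i') → Bool,
      Wg a d (fun x => c x.1 x.2) * exp (l * (Fg d (fun x => c x.1 x.2)
          - a ^ 2 * ∑ i, (d i : ℝ) * ((d i : ℝ) - 1)))
      = ∏ i, (Wm a (c i) * exp (l * (S (c i) * (S (c i) - 1)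
          - a ^ 2 * ((d i : ℝ) * ((d i : ℝ) - 1))))) := by
    intro c
    rw [Wg_uncurry, Finset.prod_mul_distrib, ← Real.exp_sum]
    congr 2
    rw [Fg, Finset.mul_sum, ← Finset.sum_sub_distrib, Finset.mul_sum]
    rfl
  rw [Finset.sum_congr rfl fun c _ => hterm c]
  rw [← Fintype.prod_sum (fun i x => Wm a x * exp (l * (S x * (S x - 1)
      - a ^ 2 * ((d i : ℝ) * ((d i : ℝ) - 1)))))]
  calc ∏ i, ∑ x : Fin (d i) → Bool, Wm a x * exp (l * (S x * (S x - 1)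
          - a ^ 2 * ((d i : ℝ) * ((d i : ℝ) - 1))))
      ≤ ∏ i, exp (l ^ 2 * ((d i : ℝ) * ((d i : ℝ) + 1) ^ 2) / 2) := by
        apply Finset.prod_le_prod
        · intro i _
          apply Finset.sum_nonneg
          intro x _
          exact mul_nonneg (Wm_nonneg ha0 ha1 x) (exp_pos _).le
        · intro i _
          exact vertex_mgf ha0 ha1 l (d i)
    _ = exp (l ^ 2 * (∑ i, (d i : ℝ) * ((d i : ℝ) + 1) ^ 2) / 2) := by
        rw [← Real.exp_sum]
        congr 1
        rw [Finset.mul_sum, Finset.sum_div]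

end Global

section Chernoff
variable {α : Type*} [Fintype α]

lemma tail_one (W F : α → ℝ) (μ0 t V : ℝ)
    (hW : ∀ c, 0 ≤ W c) (ht : 0 < t) (hV : 0 < V)
    (hmgf : ∀ l : ℝ, ∑ c, W c * exp (l * (F c - μ0)) ≤ exp (l ^ 2 * V / 2)) :
    ∑ c ∈ Finset.univ.filter (fun c => t < F c - μ0), W c
      ≤ exp (-(t ^ 2) / (2 * V)) := by
  classical
  set l := t / V with hl
  have hl0 : 0 < l := div_pos ht hV
  have hpt : ∀ c ∈ Finset.univ.filter (fun c => t < F c - μ0),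
      W c ≤ (W c * exp (l * (F c - μ0))) * exp (-(l * t)) := by
    intro c hc
    have hc' : t < F c - μ0 := (Finset.mem_filter.1 hc).2
    have h1 : (1:ℝ) ≤ exp (l * (F c - μ0) - l * t) := by
      apply Real.one_le_exp
      nlinarith
    calc W c = W c * 1 := (mul_one _).symm
      _ ≤ W c * exp (l * (F c - μ0) - l * t) := mul_le_mul_of_nonneg_left h1 (hW c)
      _ = (W c * exp (l * (F c - μ0))) * exp (-(l * t)) := by
          rw [mul_assoc, ← exp_add]; congr 2 <;> ring
  calc ∑ c ∈ Finset.univ.filter (fun c => t < F c - μ0), W c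
      ≤ ∑ c ∈ Finset.univ.filter (fun c => t < F c - μ0),
          (W c * exp (l * (F c - μ0))) * exp (-(l * t)) := Finset.sum_le_sum hpt
    _ ≤ ∑ c, (W c * exp (l * (F c - μ0))) * exp (-(l * t)) := by
        apply Finset.sum_le_sum_of_subset_of_nonneg (Finset.filter_subset _ _)
        intro c _ _
        exact mul_nonneg (mul_nonneg (hW c) (exp_pos _).le) (exp_pos _).le
    _ = (∑ c, W c * exp (l * (F c - μ0))) * exp (-(l * t)) := by
        rw [Finset.sum_mul]
    _ ≤ exp (l ^ 2 * V / 2) * exp (-(l * t)) :=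
        mul_le_mul_of_nonneg_right (hmgf l) (exp_pos _).le
    _ = exp (-(t ^ 2) / (2 * V)) := by
        rw [← exp_add]
        congr 1
        rw [hl]
        field_simp
        ring

lemma cube_chernoff (W F : α → ℝ) (μ0 t V : ℝ)
    (hW : ∀ c, 0 ≤ W c) (ht : 0 < t) (hV : 0 < V)
    (hmgf : ∀ l : ℝ, ∑ c, W c * exp (l * (F c - μ0)) ≤ exp (l ^ 2 * V / 2)) :
    ∑ c ∈ Finset.univ.filter (fun c => t < |F c - μ0|), W c
      ≤ 2 * exp (-(t ^ 2) / (2 * V)) := by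
  classical
  have hup := tail_one W F μ0 t V hW ht hV hmgf
  have hmgf' : ∀ l : ℝ, ∑ c, W c * exp (l * ((-F c) - (-μ0))) ≤ exp (l ^ 2 * V / 2) := by
    intro l
    have := hmgf (-l)
    calc ∑ c, W c * exp (l * ((-F c) - (-μ0)))
        = ∑ c, W c * exp ((-l) * (F c - μ0)) := by
          apply Finset.sum_congr rfl; intro c _; congr 2; ring
      _ ≤ exp ((-l) ^ 2 * V / 2) := hmgf (-l)
      _ = exp (l ^ 2 * V / 2) := by congr 1; ring
  have hdown := tail_one W (fun c => -F c) (-μ0) t V hW ht hV hmgf'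
  have hsubset : Finset.univ.filter (fun c => t < |F c - μ0|)
      ⊆ Finset.univ.filter (fun c => t < F c - μ0)
        ∪ Finset.univ.filter (fun c => t < (-F c) - (-μ0)) := by
    intro c hc
    have := (Finset.mem_filter.1 hc).2
    rcases abs_cases (F c - μ0) with ⟨h1, _⟩ | ⟨h1, _⟩
    · apply Finset.mem_union_left
      exact Finset.mem_filter.2 ⟨Finset.mem_univ c, by linarith⟩
    · apply Finset.mem_union_right
      exact Finset.mem_filter.2 ⟨Finset.mem_univ c, by linarith⟩
  have hdisj : Disjoint (Finset.univ.filter (fun c => t < F c - μ0))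
      (Finset.univ.filter (fun c => t < (-F c) - (-μ0))) := by
    rw [Finset.disjoint_left]
    intro c h1 h2
    have := (Finset.mem_filter.1 h1).2
    have := (Finset.mem_filter.1 h2).2
    linarith
  calc ∑ c ∈ Finset.univ.filter (fun c => t < |F c - μ0|), W c
      ≤ ∑ c ∈ (Finset.univ.filter (fun c => t < F c - μ0)
          ∪ Finset.univ.filter (fun c => t < (-F c) - (-μ0))), W c := by
        apply Finset.sum_le_sum_of_subset_of_nonneg hsubset
        intro c _ _; exact hW c
    _ = ∑ c ∈ Finset.univ.filter (fun c => t < F c - μ0), W c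
        + ∑ c ∈ Finset.univ.filter (fun c => t < (-F c) - (-μ0)), W c :=
        Finset.sum_union hdisj
    _ ≤ exp (-(t ^ 2) / (2 * V)) + exp (-(t ^ 2) / (2 * V)) := add_le_add hup hdown
    _ = 2 * exp (-(t ^ 2) / (2 * V)) := by ring

end Chernoff

lemma ofReal_prod_of_nonneg {α : Type*} (s : Finset α) (f : α → ℝ)
    (h : ∀ i ∈ s, 0 ≤ f i) :
    ENNReal.ofReal (∏ i ∈ s, f i) = ∏ i ∈ s, ENNReal.ofReal (f i) := by
  induction s using Finset.cons_induction with
  | empty => simp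
  | cons b s hb ih =>
      rw [Finset.prod_cons, Finset.prod_cons,
        ENNReal.ofReal_mul (h b (Finset.mem_cons_self b s)),
        ih fun i hi => h i (Finset.mem_cons_of_mem hi)]


end PDC

open PDC

/-- **Concentration of the percolated second factorial moment (inequality (9.2)).**
Let `d_1, …, d_n` be nonnegative integers, `p ∈ [0,1]`, and let `(I_{ij})_{i∈[n], j∈[d_i]}`
be independent Bernoulli(`√p`) random variables. With `d̃_i = ∑_{j=1}^{d_i} I_{ij}` and
`f = ∑_{i=1}^n d̃_i(d̃_i − 1)`, one has `E[f] = p ∑_i d_i(d_i − 1)` and, for every `t > 0`,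
`P(|f − p ∑_i d_i(d_i−1)| > t) ≤ 2 exp(−t² / (2 ∑_i d_i (d_i+1)²))`. -/
theorem percolated_degree_concentration
    {Ω : Type*} [MeasurableSpace Ω] (μ : Measure Ω) [IsProbabilityMeasure μ]
    (n : ℕ) (hn : 0 < n) (d : Fin n → ℕ) (p : ℝ) (hp : p ∈ Set.Icc (0 : ℝ) 1)
    (I : (Σ i : Fin n, Fin (d i)) → Ω → ℝ)
    (hmeas : ∀ q, Measurable (I q))
    (hvals : ∀ q, ∀ ω, I q ω = 0 ∨ I q ω = 1)
    (hber : ∀ q, μ {ω | I q ω = 1} = ENNReal.ofReal (Real.sqrt p))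
    (hindep : iIndepFun I μ) :
    (∫ ω, (∑ i : Fin n,
        (∑ j : Fin (d i), I ⟨i, j⟩ ω) * ((∑ j : Fin (d i), I ⟨i, j⟩ ω) - 1)) ∂μ)
      = p * ∑ i : Fin n, (d i : ℝ) * ((d i : ℝ) - 1) ∧
    ∀ t : ℝ, 0 < t →
      μ {ω | |(∑ i : Fin n,
            (∑ j : Fin (d i), I ⟨i, j⟩ ω) * ((∑ j : Fin (d i), I ⟨i, j⟩ ω) - 1))
          - p * ∑ i : Fin n, (d i : ℝ) * ((d i : ℝ) - 1)| > t}
        ≤ ENNReal.ofReal (2 * Real.exp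
            (-(t ^ 2) / (2 * ∑ i : Fin n, (d i : ℝ) * ((d i : ℝ) + 1) ^ 2))) := by
  classical
  set a := Real.sqrt p with ha_def
  have ha0 : 0 ≤ a := Real.sqrt_nonneg p
  have ha1 : a ≤ 1 := Real.sqrt_le_one.2 hp.2
  have hap : a ^ 2 = p := Real.sq_sqrt hp.1
  set Ec : ((Σ i : Fin n, Fin (d i)) → Bool) → Set Ω :=
    fun c => ⋂ x, I x ⁻¹' {vb (c x)} with hEc_def
  have hEc_meas : ∀ c, MeasurableSet (Ec c) :=
    fun c => MeasurableSet.iInter fun x => hmeas x (measurableSet_singleton _)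
  have hI1 : ∀ x, μ (I x ⁻¹' {(1:ℝ)}) = ENNReal.ofReal a := by
    intro x
    have h : I x ⁻¹' {(1:ℝ)} = {ω | I x ω = 1} := by ext ω; simp
    rw [h, hber x]
  have hI0 : ∀ x, μ (I x ⁻¹' {(0:ℝ)}) = ENNReal.ofReal (1 - a) := by
    intro x
    have hc : I x ⁻¹' {(0:ℝ)} = (I x ⁻¹' {(1:ℝ)})ᶜ := by
      ext ω
      simp only [Set.mem_preimage, Set.mem_singleton_iff, Set.mem_compl_iff]
      constructor
      · intro h h1; rw [h] at h1; norm_num at h1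
      · intro h; rcases hvals x ω with h0 | h1
        · exact h0
        · exact absurd h1 h
    rw [hc, prob_compl_eq_one_sub (hmeas x (measurableSet_singleton _)), hI1 x,
      ENNReal.ofReal_sub 1 ha0, ENNReal.ofReal_one]
  have hEc_measure : ∀ c, μ (Ec c) = ENNReal.ofReal (Wg a d c) := by
    intro c
    have h := hindep.meas_iInter (s := fun x => I x ⁻¹' {vb (c x)})
      (fun x => ⟨{vb (c x)}, measurableSet_singleton _, rfl⟩)
    rw [hEc_def]
    rw [h]
    have hx : ∀ x, μ (I x ⁻¹' {vb (c x)}) = ENNReal.ofReal (w a (c x)) := by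
      intro x
      cases c x
      · exact hI0 x
      · exact hI1 x
    rw [Finset.prod_congr rfl fun x _ => hx x, Wg,
      ofReal_prod_of_nonneg _ _ (fun x _ => by
        cases c x <;> simp [w] <;> linarith)]
  -- configuration map
  set cfg : Ω → ((Σ i : Fin n, Fin (d i)) → Bool) :=
    fun ω x => if I x ω = 1 then true else false with hcfg_def
  have hIv : ∀ x ω, I x ω = vb (cfg ω x) := by
    intro x ω
    rcases hvals x ω with h | h
    · have hne : ¬ (I x ω = 1) := by rw [h]; norm_num
      simp [hcfg_def, hne, vb, h]
    · simp [hcfg_def, h, vb]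
  have hmem : ∀ ω, ω ∈ Ec (cfg ω) := by
    intro ω
    rw [hEc_def]
    exact Set.mem_iInter.2 fun x => by simp [Set.mem_preimage, hIv x ω]
  have huniq : ∀ ω c, ω ∈ Ec c → c = cfg ω := by
    intro ω c hc
    funext x
    have hx : I x ω = vb (c x) := by
      have := Set.mem_iInter.1 hc x
      simpa using this
    cases hcx : c x
    · rw [hcx] at hx; simp only [vb, cond_false] at hx
      have hne : ¬ (I x ω = 1) := by rw [hx]; norm_num
      simp [hcfg_def, hne]
    · rw [hcx] at hx; simp only [vb, cond_true] at hx
      simp [hcfg_def, hx]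
  have f_eq : ∀ ω, (∑ i : Fin n,
      (∑ j : Fin (d i), I ⟨i, j⟩ ω) * ((∑ j : Fin (d i), I ⟨i, j⟩ ω) - 1))
      = Fg d (cfg ω) := by
    intro ω
    rw [Fg]
    apply Finset.sum_congr rfl
    intro i _
    have hs : (∑ j : Fin (d i), I ⟨i, j⟩ ω) = S (restr (cfg ω) i) := by
      rw [S]
      exact Finset.sum_congr rfl fun j _ => hIv ⟨i, j⟩ ω
    rw [hs]
  constructor
  · -- expectation
    have hindrepr : ∀ ω, (∑ i : Fin n,
        (∑ j : Fin (d i), I ⟨i, j⟩ ω) * ((∑ j : Fin (d i), I ⟨i, j⟩ ω) - 1))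
        = ∑ c, (Ec c).indicator (fun _ => Fg d c) ω := by
      intro ω
      rw [f_eq ω]
      rw [Finset.sum_eq_single (cfg ω)]
      · rw [Set.indicator_of_mem (hmem ω)]
      · intro c _ hne
        rw [Set.indicator_of_notMem]
        intro hmemc; exact hne (huniq ω c hmemc)
      · intro h; exact absurd (Finset.mem_univ _) h
    calc (∫ ω, (∑ i : Fin n,
          (∑ j : Fin (d i), I ⟨i, j⟩ ω) * ((∑ j : Fin (d i), I ⟨i, j⟩ ω) - 1)) ∂μ)
        = ∫ ω, (∑ c, (Ec c).indicator (fun _ => Fg d c) ω) ∂μ :=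
          integral_congr_ae (Filter.Eventually.of_forall fun ω => hindrepr ω)
      _ = ∑ c, ∫ ω, (Ec c).indicator (fun _ => Fg d c) ω ∂μ :=
          integral_finset_sum _ (fun c _ => (integrable_const _).indicator (hEc_meas c))
      _ = ∑ c, Wg a d c * Fg d c := by
          apply Finset.sum_congr rfl
          intro c _
          rw [integral_indicator_const _ (hEc_meas c), measureReal_def, hEc_measure c,
            ENNReal.toReal_ofReal (Wg_nonneg ha0 ha1 c), smul_eq_mul]
      _ = p * ∑ i, (d i : ℝ) * ((d i : ℝ) - 1) := by
          rw [global_mean ha0 ha1, hap]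
  · -- tail
    intro t ht
    set μ0 : ℝ := p * ∑ i, (d i : ℝ) * ((d i : ℝ) - 1) with hμ0
    set V : ℝ := ∑ i, (d i : ℝ) * ((d i : ℝ) + 1) ^ 2 with hV_def
    have hμ0' : μ0 = a ^ 2 * ∑ i, (d i : ℝ) * ((d i : ℝ) - 1) := by rw [hμ0, hap]
    have hset : {ω | |(∑ i : Fin n,
          (∑ j : Fin (d i), I ⟨i, j⟩ ω) * ((∑ j : Fin (d i), I ⟨i, j⟩ ω) - 1)) - μ0| > t}
        = ⋃ c ∈ Finset.univ.filter (fun c => t < |Fg d c - μ0|), Ec c := by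
      ext ω
      simp only [Set.mem_setOf_eq, Set.mem_iUnion, exists_prop]
      constructor
      · intro h
        refine ⟨cfg ω, Finset.mem_filter.2 ⟨Finset.mem_univ _, ?_⟩, hmem ω⟩
        rw [← f_eq ω]; exact h
      · rintro ⟨c, hcf, hcm⟩
        have h2 := (Finset.mem_filter.1 hcf).2
        rw [huniq ω c hcm] at h2
        rw [f_eq ω]
        exact h2
    have hdisj : (↑(Finset.univ.filter (fun c => t < |Fg d c - μ0|)) :
        Set ((Σ i : Fin n, Fin (d i)) → Bool)).PairwiseDisjoint Ec := by
      intro c _ c' _ hne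
      rw [Function.onFun, Set.disjoint_left]
      intro ω hc hc'
      exact hne ((huniq ω c hc).trans (huniq ω c' hc').symm)
    rw [hset, measure_biUnion_finset hdisj (fun c _ => hEc_meas c)]
    rw [Finset.sum_congr rfl fun c _ => hEc_measure c,
      ← ENNReal.ofReal_sum_of_nonneg (fun c _ => Wg_nonneg ha0 ha1 c)]
    apply ENNReal.ofReal_le_ofReal
    by_cases hV : 0 < V
    · apply cube_chernoff (Wg a d) (Fg d) μ0 t V (Wg_nonneg ha0 ha1) ht hV
      intro l
      rw [hμ0']
      exact global_mgf ha0 ha1 l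
    · have hV0 : (0:ℝ) ≤ V := by
        rw [hV_def]; apply Finset.sum_nonneg; intro i _; positivity
      have hVz : V = 0 := le_antisymm (not_lt.1 hV) hV0
      have hd0 : ∀ i : Fin n, (d i : ℝ) = 0 := by
        intro i
        have := (Finset.sum_eq_zero_iff_of_nonneg (fun i _ => by positivity)).1
          (hV_def ▸ hVz) i (Finset.mem_univ i)
        have hpos : (0:ℝ) < ((d i : ℝ) + 1) ^ 2 := by positivity
        nlinarith [this]
      have hF : ∀ c, Fg d c = 0 := by
        intro c
        rw [Fg]
        apply Finset.sum_eq_zero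
        intro i _
        have hdi : d i = 0 := Nat.cast_eq_zero.1 (hd0 i)
        have hS : S (restr c i) = 0 := by
          rw [S]
          apply Finset.sum_eq_zero
          intro j _
          exact (Fin.cast hdi j).elim0
        rw [hS]; ring
      have hμ0z : μ0 = 0 := by
        rw [hμ0, Finset.sum_eq_zero fun i _ => by rw [hd0 i]; ring, mul_zero]
      have hfe : Finset.univ.filter
          (fun c : (Σ i : Fin n, Fin (d i)) → Bool => t < |Fg d c - μ0|) = ∅ := by
        apply Finset.filter_eq_empty_iff.2
        intro c _
        rw [hF c, hμ0z]
        simp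
        linarith
      rw [hfe, Finset.sum_empty]
      positivity
end
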